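/- arXiv:2210.04752 — 7 statements merged into one kernel-verified Lean document; each statement's English description precedes it below -/
import Mathlib

section
/- Let A be a compact normal bounded operator on a complex Hilbert space H, written in its canonical form A = Σ_{n∈S} λₙ Pₙ, where S ⊂ ℕ₀ with 0 ∈ S, the λₙ (n ∈ S \ {0}) are the distinct non-zero eigenvalues of A, λ₀ = 0, P₀ is the orthogonal projection onto ker A, and for n ≠ 0 the Pₙ are the mutually orthogonal Riesz (eigenspace) projections onto the eigenspaces of λₙ. Then for every g ∈ H, the closure of the Krylov subspace K(A,g) equals the closed linear span of the vectors { Pₙ g : n ∈ S }. -/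
open Filter Topology Finset
open scoped InnerProductSpace

lemma circle_lemma {ι : Type*} (G : Finset ι) (ω : ι → ℂ) (c : ι → ℂ)
    (hω : ∀ m ∈ G, ‖ω m‖ = 1)
    (hinj : ∀ m ∈ G, ∀ n ∈ G, ω m = ω n → m = n)
    (h : Tendsto (fun k : ℕ => ∑ m ∈ G, ω m ^ k * c m) atTop (𝓝 0)) :
    ∀ j ∈ G, c j = 0 := by
  classical
  intro j hj
  have hjj : ω j * starRingEnd ℂ (ω j) = 1 := by
    rw [Complex.mul_conj, Complex.normSq_eq_norm_sq, hω j hj]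
    norm_num
  set a : ℕ → ℂ := fun k => (∑ m ∈ G, ω m ^ k * c m) * (starRingEnd ℂ (ω j)) ^ k with ha
  have ha0 : Tendsto a atTop (𝓝 0) := by
    have hb : ∀ k : ℕ, ‖a k‖ ≤ ‖∑ m ∈ G, ω m ^ k * c m‖ := by
      intro k
      simp only [ha, norm_mul, norm_pow, RCLike.norm_conj, hω j hj, one_pow, mul_one, le_refl]
    exact squeeze_zero_norm hb (tendsto_zero_iff_norm_tendsto_zero.mp h)
  have hces : Tendsto (fun N : ℕ => ((N : ℝ)⁻¹) • ∑ k ∈ range N, a k) atTop (𝓝 0) :=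
    ha0.cesaro_smul
  have hrw : ∀ N : ℕ, ((N : ℝ)⁻¹) • ∑ k ∈ range N, a k
      = ∑ m ∈ G, (((N : ℝ)⁻¹) • ∑ k ∈ range N, (ω m * starRingEnd ℂ (ω j)) ^ k) * c m := by
    intro N
    have h1 : ∀ k ∈ range N, a k = ∑ m ∈ G, (ω m * starRingEnd ℂ (ω j)) ^ k * c m := by
      intro k _
      simp only [ha, Finset.sum_mul, mul_pow]
      exact Finset.sum_congr rfl fun m _ => by ring
    rw [Finset.sum_congr rfl h1, Finset.sum_comm, Finset.smul_sum]
    refine Finset.sum_congr rfl fun m _ => ?_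
    rw [← Finset.sum_mul, smul_mul_assoc]
  have hlim : Tendsto (fun N : ℕ =>
      ∑ m ∈ G, (((N : ℝ)⁻¹) • ∑ k ∈ range N, (ω m * starRingEnd ℂ (ω j)) ^ k) * c m)
      atTop (𝓝 (c j)) := by
    have hterm : ∀ m ∈ G, Tendsto (fun N : ℕ =>
        (((N : ℝ)⁻¹) • ∑ k ∈ range N, (ω m * starRingEnd ℂ (ω j)) ^ k) * c m)
        atTop (𝓝 (if m = j then c m else 0)) := by
      intro m hm
      by_cases hmj : m = j
      · subst hmj
        simp only [if_pos rfl, hjj, one_pow, Finset.sum_const, card_range, nsmul_eq_mul, mul_one]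
        have hev : ∀ᶠ N : ℕ in atTop,
            (c m : ℂ) = ((N : ℝ)⁻¹ • (N : ℂ)) * c m := by
          filter_upwards [Ici_mem_atTop 1] with N hN
          have hN0 : (N : ℂ) ≠ 0 := by
            have : 0 < N := hN
            exact_mod_cast this.ne'
          rw [Complex.real_smul]
          push_cast
          field_simp
        exact Tendsto.congr' hev tendsto_const_nhds
      · simp only [if_neg hmj]
        set z := ω m * starRingEnd ℂ (ω j) with hzdef
        have hznorm : ‖z‖ = 1 := by
          rw [hzdef, norm_mul, RCLike.norm_conj, hω m hm, hω j hj, one_mul]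
        have hz1 : z ≠ 1 := by
          intro hcon
          refine hmj (hinj m hm j hj ?_)
          have hcj : starRingEnd ℂ (ω j) ≠ 0 := by
            intro h0
            rw [hzdef, h0, mul_zero] at hcon
            exact one_ne_zero hcon.symm
          exact mul_right_cancel₀ hcj (hcon.trans hjj.symm)
        have hbound : ∀ N : ℕ,
            ‖(((N : ℝ)⁻¹) • ∑ k ∈ range N, z ^ k) * c m‖
              ≤ (N : ℝ)⁻¹ * (2 / ‖z - 1‖ * ‖c m‖) := by
          intro N
          rw [norm_mul, norm_smul, norm_inv, Real.norm_natCast]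
          rw [geom_sum_eq hz1]
          have h2 : ‖(z ^ N - 1) / (z - 1)‖ ≤ 2 / ‖z - 1‖ := by
            rw [norm_div]
            gcongr
            calc ‖z ^ N - 1‖ ≤ ‖z ^ N‖ + ‖(1 : ℂ)‖ := norm_sub_le _ _
                _ = 1 + 1 := by rw [norm_pow, hznorm, one_pow, norm_one]
                _ = 2 := by norm_num
          calc (N : ℝ)⁻¹ * ‖(z ^ N - 1) / (z - 1)‖ * ‖c m‖
              ≤ (N : ℝ)⁻¹ * (2 / ‖z - 1‖) * ‖c m‖ := by
                apply mul_le_mul_of_nonneg_right _ (norm_nonneg _)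
                exact mul_le_mul_of_nonneg_left h2 (by positivity)
            _ = (N : ℝ)⁻¹ * (2 / ‖z - 1‖ * ‖c m‖) := by ring
        apply squeeze_zero_norm hbound
        have : Tendsto (fun N : ℕ => (N : ℝ)⁻¹) atTop (𝓝 0) :=
          tendsto_inv_atTop_nhds_zero_nat
        simpa using this.mul_const (2 / ‖z - 1‖ * ‖c m‖)
    have := tendsto_finset_sum G hterm
    rwa [Finset.sum_ite_eq' G j c, if_pos hj] at this
  exact (tendsto_nhds_unique (hces.congr hrw) hlim).symm

lemma moment_lemma {ι : Type*} (lam : ι → ℂ) (b : ι → ℂ)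
    (hinj : Function.Injective lam)
    (hsum : Summable (fun m => ‖b m‖))
    (hfin : ∀ r : ℝ, 0 < r → {m : ι | r ≤ ‖lam m‖ ∧ b m ≠ 0}.Finite)
    (hmom : ∀ k : ℕ, HasSum (fun m => lam m ^ k * b m) 0) :
    ∀ m, b m = 0 := by
  classical
  have main : ∀ m, lam m ≠ 0 → b m = 0 := by
    by_contra hcon
    push_neg at hcon
    obtain ⟨m₀, hlm₀, hbm₀⟩ := hcon
    have hr₀ : (0 : ℝ) < ‖lam m₀‖ := norm_pos_iff.mpr hlm₀
    set F₁ := (hfin ‖lam m₀‖ hr₀).toFinset with hF₁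
    have hm₀F₁ : m₀ ∈ F₁ := by
      rw [hF₁, Set.Finite.mem_toFinset]
      exact ⟨le_refl _, hbm₀⟩
    have hF₁ne : F₁.Nonempty := ⟨m₀, hm₀F₁⟩
    set r := F₁.sup' hF₁ne (fun m => ‖lam m‖) with hrdef
    have hr_pos : 0 < r := lt_of_lt_of_le hr₀ (Finset.le_sup' (fun m => ‖lam m‖) hm₀F₁)
    have hr_bound : ∀ m, b m ≠ 0 → ‖lam m‖ ≤ r := by
      intro m hbm
      by_cases hle : ‖lam m‖ < ‖lam m₀‖
      · exact hle.le.trans (Finset.le_sup' (fun m => ‖lam m‖) hm₀F₁)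
      · push_neg at hle
        have : m ∈ F₁ := by rw [hF₁, Set.Finite.mem_toFinset]; exact ⟨hle, hbm⟩
        exact Finset.le_sup' (fun m => ‖lam m‖) this
    set F₂ := (hfin (r / 2) (by positivity)).toFinset with hF₂
    have hF₂mem : ∀ m, m ∈ F₂ ↔ r / 2 ≤ ‖lam m‖ ∧ b m ≠ 0 := by
      intro m; rw [hF₂, Set.Finite.mem_toFinset]; rfl
    set G := F₂.filter (fun m => ‖lam m‖ = r) with hG
    obtain ⟨m₁, hm₁F₁, hm₁max⟩ := Finset.exists_mem_eq_sup' hF₁ne (fun m => ‖lam m‖)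
    have hbm₁ : b m₁ ≠ 0 := ((Set.Finite.mem_toFinset _).mp (hF₁ ▸ hm₁F₁)).2
    have hm₁G : m₁ ∈ G := by
      rw [hG, Finset.mem_filter, hF₂mem]
      refine ⟨⟨?_, hbm₁⟩, hm₁max.symm⟩
      rw [← hm₁max]; linarith
    set bigset := insert (r / 2) ((F₂ \ G).image fun m => ‖lam m‖) with hbig
    set r' := bigset.max' (Finset.insert_nonempty _ _) with hr'
    have hr'_mem : r' ∈ bigset := bigset.max'_mem _
    have hGnorm : ∀ m ∈ G, ‖lam m‖ = r := by
      intro m hm; exact (Finset.mem_filter.mp hm).2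
    have hr'_lt : r' < r := by
      rcases Finset.mem_insert.mp (hbig ▸ hr'_mem) with h1 | h1
      · rw [h1]; linarith
      · obtain ⟨m, hm, hme⟩ := Finset.mem_image.mp h1
        obtain ⟨hmF₂, hmG⟩ := Finset.mem_sdiff.mp hm
        have hb := (hF₂mem m).mp hmF₂
        have hne : ‖lam m‖ ≠ r := fun hcontra =>
          hmG (by rw [hG, Finset.mem_filter]; exact ⟨hmF₂, hcontra⟩)
        rw [← hme]
        exact lt_of_le_of_ne (hr_bound m hb.2) hne
    have hr'_half : r / 2 ≤ r' := Finset.le_max' _ _ (Finset.mem_insert_self _ _)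
    have hr'_pos : 0 < r' := lt_of_lt_of_le (by positivity) hr'_half
    have houtside : ∀ m, m ∉ G → b m ≠ 0 → ‖lam m‖ ≤ r' := by
      intro m hmG hbm
      by_cases hbig2 : r / 2 ≤ ‖lam m‖
      · have hmF₂ : m ∈ F₂ := (hF₂mem m).mpr ⟨hbig2, hbm⟩
        have hms : m ∈ F₂ \ G := Finset.mem_sdiff.mpr ⟨hmF₂, hmG⟩
        exact Finset.le_max' bigset ‖lam m‖ (Finset.mem_insert_of_mem
          (Finset.mem_image.mpr ⟨m, hms, rfl⟩))
      · push_neg at hbig2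
        exact hbig2.le.trans hr'_half
    set C := ∑' m, ‖b m‖ with hC
    have hGsum : ∀ k : ℕ, ‖∑ m ∈ G, lam m ^ k * b m‖ ≤ r' ^ k * C := by
      intro k
      have h1 : HasSum (fun m => if m ∈ G then lam m ^ k * b m else 0)
          (∑ m ∈ G, lam m ^ k * b m) := by
        have h1' := hasSum_sum_of_ne_finset_zero (s := G) (L := SummationFilter.unconditional _)
          (f := fun m => if m ∈ G then lam m ^ k * b m else 0) (fun m hm => if_neg hm)
        rwa [Finset.sum_congr rfl (fun m hm => if_pos hm)] at h1'
      have h2 := h1.sub (hmom k)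
      rw [sub_zero] at h2
      have heq : (fun m => (if m ∈ G then lam m ^ k * b m else 0) - lam m ^ k * b m)
          = fun m => if m ∈ G then 0 else -(lam m ^ k * b m) := by
        funext m; by_cases hm : m ∈ G <;> simp [hm]
      rw [heq] at h2
      have hpt : ∀ m, ‖if m ∈ G then (0:ℂ) else -(lam m ^ k * b m)‖ ≤ r' ^ k * ‖b m‖ := by
        intro m
        by_cases hm : m ∈ G
        · rw [if_pos hm, norm_zero]; positivity
        · rw [if_neg hm, norm_neg, norm_mul, norm_pow]
          by_cases hbm : b m = 0
          · rw [hbm, norm_zero, mul_zero, mul_zero]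
          · exact mul_le_mul_of_nonneg_right
              (pow_le_pow_left₀ (norm_nonneg _) (houtside m hm hbm) k)
              (norm_nonneg _)
      have hsum2 : Summable (fun m => r' ^ k * ‖b m‖) := hsum.mul_left _
      have hsumnorm : Summable (fun m => ‖if m ∈ G then (0:ℂ) else -(lam m ^ k * b m)‖) :=
        Summable.of_nonneg_of_le (fun m => norm_nonneg _) hpt hsum2
      calc ‖∑ m ∈ G, lam m ^ k * b m‖ = ‖∑' m, if m ∈ G then (0:ℂ) else -(lam m ^ k * b m)‖ := by
            rw [h2.tsum_eq]
        _ ≤ ∑' m, ‖if m ∈ G then (0:ℂ) else -(lam m ^ k * b m)‖ :=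
            norm_tsum_le_tsum_norm hsumnorm
        _ ≤ ∑' m, r' ^ k * ‖b m‖ := Summable.tsum_le_tsum hpt hsumnorm hsum2
        _ = r' ^ k * C := by rw [tsum_mul_left]
    -- apply the circle lemma with ω m = lam m / r
    have htend : Tendsto (fun k : ℕ => ∑ m ∈ G, (lam m / r) ^ k * b m) atTop (𝓝 0) := by
      have heq : ∀ k : ℕ, ∑ m ∈ G, (lam m / r) ^ k * b m
          = (∑ m ∈ G, lam m ^ k * b m) / (r : ℂ) ^ k := by
        intro k
        rw [Finset.sum_div]
        refine Finset.sum_congr rfl fun m _ => ?_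
        rw [div_pow, div_mul_eq_mul_div]
      have hbound : ∀ k : ℕ, ‖(∑ m ∈ G, lam m ^ k * b m) / (r : ℂ) ^ k‖
          ≤ C * (r' / r) ^ k := by
        intro k
        rw [norm_div, norm_pow, Complex.norm_real, Real.norm_of_nonneg hr_pos.le]
        have hrhs : C * (r' / r) ^ k = (r' ^ k * C) / r ^ k := by
          rw [div_pow]; ring
        rw [hrhs]
        gcongr
        exact hGsum k
      have hgeo : Tendsto (fun k : ℕ => C * (r' / r) ^ k) atTop (𝓝 0) := by
        have : Tendsto (fun k : ℕ => (r' / r) ^ k) atTop (𝓝 0) :=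
          tendsto_pow_atTop_nhds_zero_of_lt_one (by positivity)
            (by rw [div_lt_one hr_pos]; exact hr'_lt)
        simpa using this.const_mul C
      simp only [heq]
      exact squeeze_zero_norm hbound hgeo
    have hzero := circle_lemma G (fun m => lam m / r) b
      (fun m hm => by
        rw [norm_div, Complex.norm_real, Real.norm_of_nonneg hr_pos.le, hGnorm m hm,
          div_self hr_pos.ne'])
      (fun m hm n hn hmn => by
        apply hinj
        have hr0 : (r : ℂ) ≠ 0 := by exact_mod_cast hr_pos.ne'
        have h2 := congrArg (· * (r : ℂ)) hmn
        simpa [div_mul_cancel₀, hr0] using h2)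
      htend
    exact hbm₁ (hzero m₁ hm₁G)
  intro m
  by_cases hlm : lam m = 0
  · have h0 := hmom 0
    simp only [pow_zero, one_mul] at h0
    have hfuneq : (fun j => b j) = (fun j => if j = m then b m else 0) := by
      funext j
      by_cases hjm : j = m
      · rw [if_pos hjm, hjm]
      · rw [if_neg hjm]
        apply main
        intro hlj
        exact hjm (hinj (hlj.trans hlm.symm))
    rw [hfuneq] at h0
    exact (hasSum_ite_eq m (b m)).unique h0
  · exact main m hlm

/-- For a compact normal operator `A = Σ_{n ∈ S} λₙ Pₙ` on a complex Hilbert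
space (canonical decomposition: `λ₀ = 0`, the `λₙ`, `n ∈ S \ {0}`, distinct non-zero
eigenvalues, `Pₙ` the mutually orthogonal eigenprojections, `P₀` the orthogonal projection
onto `ker A`, `Σ Pₙ = 1` strongly) and any `g ∈ H`, the closure of the Krylov subspace
`K(A,g) = span{A^k g : k ∈ ℕ}` equals the closed span of `{Pₙ g : n ∈ S}`. -/
theorem krylov_closure_eq_closed_span_eigenprojections
    {H : Type*} [NormedAddCommGroup H] [InnerProductSpace ℂ H] [CompleteSpace H]
    (A : H →L[ℂ] H) (hcpt : IsCompactOperator A) (hnormal : IsStarNormal A)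
    (S : Set ℕ) (h0S : 0 ∈ S) (lam : ℕ → ℂ) (P : ℕ → H →L[ℂ] H)
    (hlam0 : lam 0 = 0)
    (hlam_ne : ∀ n ∈ S, n ≠ 0 → lam n ≠ 0)
    (hlam_inj : ∀ m ∈ S, ∀ n ∈ S, lam m = lam n → m = n)
    (hP_sa : ∀ n ∈ S, IsSelfAdjoint (P n))
    (hP_idem : ∀ n ∈ S, IsIdempotentElem (P n))
    (hP_orth : ∀ m ∈ S, ∀ n ∈ S, m ≠ n → P m * P n = 0)
    (hP0 : LinearMap.range (P 0 : H →ₗ[ℂ] H) = LinearMap.ker (A : H →ₗ[ℂ] H))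
    (hPeig : ∀ n ∈ S, n ≠ 0 →
      LinearMap.range (P n : H →ₗ[ℂ] H) = LinearMap.ker ((A - lam n • (1 : H →L[ℂ] H) : H →L[ℂ] H) : H →ₗ[ℂ] H))
    (hAsum : HasSum (fun n : S => lam n • P n) A)
    (hres : ∀ x : H, HasSum (fun n : S => P n x) x)
    (g : H) :
    (Submodule.span ℂ (Set.range fun k : ℕ => (A ^ k) g)).topologicalClosure
      = (Submodule.span ℂ {x : H | ∃ n ∈ S, x = P n g}).topologicalClosure := by
  classical
  have hidem : ∀ n ∈ S, ∀ x : H, P n (P n x) = P n x := by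
    intro n hn x
    have h1 := hP_idem n hn
    rw [IsIdempotentElem] at h1
    conv_rhs => rw [← h1]
    rfl
  have hAP : ∀ n ∈ S, ∀ x : H, A (P n x) = lam n • P n x := by
    intro n hn x
    by_cases hn0 : n = 0
    · subst hn0
      have hmem : P 0 x ∈ LinearMap.ker (A : H →ₗ[ℂ] H) := by
        have := hP0 ▸ LinearMap.mem_range_self (P 0 : H →ₗ[ℂ] H) x; exact this
      rw [hlam0, zero_smul]
      exact LinearMap.mem_ker.mp hmem
    · have hmem : P n x ∈ LinearMap.ker ((A - lam n • (1 : H →L[ℂ] H) : H →L[ℂ] H) : H →ₗ[ℂ] H) := by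
        have := hPeig n hn hn0 ▸ LinearMap.mem_range_self (P n : H →ₗ[ℂ] H) x; exact this
      have h2 := LinearMap.mem_ker.mp hmem
      simpa [ContinuousLinearMap.sub_apply, sub_eq_zero] using h2
  have hAkP : ∀ (k : ℕ), ∀ n ∈ S, ∀ x : H, (A ^ k) (P n x) = lam n ^ k • P n x := by
    intro k
    induction k with
    | zero => intro n hn x; simp
    | succ k ih =>
      intro n hn x
      rw [pow_succ, ContinuousLinearMap.mul_apply, hAP n hn x, map_smul, ih n hn x,
        smul_smul, ← pow_succ']
  have hAk_sum : ∀ k : ℕ, HasSum (fun n : S => lam n ^ k • P n g) ((A ^ k) g) := by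
    intro k
    have h1 := (hres g).mapL (A ^ k)
    have heq : (fun n : S => (A ^ k) (P n g)) = fun n : S => lam n ^ k • P n g :=
      funext fun n => hAkP k n n.2 g
    rwa [heq] at h1
  have hsymm : ∀ n ∈ S, ∀ x y : H, ⟪P n x, y⟫_ℂ = ⟪x, P n y⟫_ℂ := by
    intro n hn x y
    exact (hP_sa n hn).isSymmetric x y
  refine le_antisymm ?_ ?_
  · -- Krylov closure ⊆ closed span of projections
    refine Submodule.topologicalClosure_minimal _ ?_
      (Submodule.isClosed_topologicalClosure _)
    rw [Submodule.span_le]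
    rintro x ⟨k, rfl⟩
    show (A ^ k) g ∈
      (Submodule.span ℂ {x : H | ∃ n ∈ S, x = P n g}).topologicalClosure
    have hmem : ∀ n : S, lam n ^ k • P n g ∈
        Submodule.span ℂ {x : H | ∃ n ∈ S, x = P n g} :=
      fun n => Submodule.smul_mem _ _ (Submodule.subset_span ⟨n, n.2, rfl⟩)
    exact mem_closure_of_tendsto (hAk_sum k) (Filter.Eventually.of_forall fun F =>
      Submodule.sum_mem _ fun n _ => hmem n)
  · -- closed span of projections ⊆ Krylov closure
    refine Submodule.topologicalClosure_minimal _ ?_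
      (Submodule.isClosed_topologicalClosure _)
    rw [Submodule.span_le]
    rintro x ⟨n, hn, rfl⟩
    set K := Submodule.span ℂ (Set.range fun k : ℕ => (A ^ k) g) with hK
    show P n g ∈ K.topologicalClosure
    rw [← Submodule.orthogonal_orthogonal_eq_closure, Submodule.mem_orthogonal]
    intro h hh
    have hOrth : ∀ k : ℕ, ⟪h, (A ^ k) g⟫_ℂ = 0 := by
      intro k
      have h1 : ⟪(A ^ k) g, h⟫_ℂ = 0 :=
        hh ((A ^ k) g) (Submodule.subset_span ⟨k, rfl⟩)
      rw [← inner_conj_symm, h1, map_zero]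
    set b : S → ℂ := fun m => ⟪h, P m g⟫_ℂ with hb
    have hmom : ∀ k : ℕ, HasSum (fun m : S => (lam m) ^ k * b m) 0 := by
      intro k
      have h1 := (hAk_sum k).mapL (innerSL ℂ h)
      simp only [innerSL_apply_apply, inner_smul_right] at h1
      rwa [hOrth k] at h1
    have hbeq : ∀ m : S, b m = ⟪P m h, P m g⟫_ℂ := by
      intro m
      show ⟪h, P (m : ℕ) g⟫_ℂ = ⟪P m h, P m g⟫_ℂ
      conv_lhs => rw [← hidem m m.2 g]
      exact (hsymm m m.2 h (P m g)).symm
    -- partial sums of ‖P m x‖² are bounded by ‖x‖²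
    have hPle : ∀ (x : H) (F : Finset S), ∑ m ∈ F, ‖P (m : ℕ) x‖ ^ 2 ≤ ‖x‖ ^ 2 := by
      intro x F
      set y := ∑ m ∈ F, P (m : ℕ) x with hy
      have horth : ∀ m ∈ F, ∀ p ∈ F, p ≠ m → ⟪P (p : ℕ) x, P (m : ℕ) x⟫_ℂ = 0 := by
        intro m _ p _ hpm
        rw [hsymm p p.2 x (P m x)]
        have hz : P (p : ℕ) (P (m : ℕ) x) = 0 := by
          have h1 := hP_orth p p.2 m m.2 (fun hc => hpm (Subtype.ext hc))
          calc P (p : ℕ) (P (m : ℕ) x) = ((P (p : ℕ) * P (m : ℕ))) x := rfl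
            _ = 0 := by rw [h1]; rfl
        rw [hz, inner_zero_right]
      have hyy : ⟪y, y⟫_ℂ = ∑ m ∈ F, ⟪P (m : ℕ) x, P (m : ℕ) x⟫_ℂ := by
        rw [hy, inner_sum]
        refine Finset.sum_congr rfl fun m hm => ?_
        rw [sum_inner, Finset.sum_eq_single m (fun p hp hpm => horth m hm p hp hpm)
          (fun hm' => absurd hm hm')]
      have hxy : ⟪y, y⟫_ℂ = ⟪x, y⟫_ℂ := by
        rw [hyy, hy, inner_sum]
        refine Finset.sum_congr rfl fun m hm => ?_
        rw [hsymm m m.2 x (P (m : ℕ) x), hidem m m.2 x]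
      have hnorm_y : ‖y‖ ≤ ‖x‖ := by
        rcases eq_or_lt_of_le (norm_nonneg y) with h0 | h0
        · rw [← h0]; exact norm_nonneg x
        · have h1 : ‖y‖ * ‖y‖ = Complex.re ⟪y, y⟫_ℂ :=
            (@inner_self_eq_norm_mul_norm ℂ _ _ _ _ y).symm
          have h2 : Complex.re ⟪x, y⟫_ℂ ≤ ‖x‖ * ‖y‖ := by
            calc Complex.re ⟪x, y⟫_ℂ ≤ ‖⟪x, y⟫_ℂ‖ := Complex.re_le_norm _
              _ ≤ ‖x‖ * ‖y‖ := norm_inner_le_norm _ _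
          have h3 : ‖y‖ * ‖y‖ ≤ ‖x‖ * ‖y‖ := by rw [h1, hxy]; exact h2
          exact le_of_mul_le_mul_right h3 h0
      have hsum_eq : ∑ m ∈ F, ‖P (m : ℕ) x‖ ^ 2 = ‖y‖ ^ 2 := by
        have h1 := congrArg Complex.re hyy
        rw [Complex.re_sum] at h1
        have h2 : ∀ m ∈ F, Complex.re ⟪P (m : ℕ) x, P (m : ℕ) x⟫_ℂ = ‖P (m : ℕ) x‖ ^ 2 :=
          fun m _ => @inner_self_eq_norm_sq ℂ _ _ _ _ (P (m : ℕ) x)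
        rw [Finset.sum_congr rfl h2] at h1
        rw [← h1]
        exact @inner_self_eq_norm_sq ℂ _ _ _ _ y
      rw [hsum_eq]
      exact pow_le_pow_left₀ (norm_nonneg _) hnorm_y 2
    have hsq : ∀ x : H, Summable (fun m : S => ‖P (m : ℕ) x‖ ^ 2) := fun x =>
      summable_of_sum_le (fun m => by positivity) (hPle x)
    have hsumb : Summable (fun m : S => ‖b m‖) := by
      refine Summable.of_nonneg_of_le (fun m => norm_nonneg _) (fun m => ?_)
        (((hsq h).add (hsq g)).div_const 2)
      rw [hbeq m]
      calc ‖⟪P (m : ℕ) h, P (m : ℕ) g⟫_ℂ‖ ≤ ‖P (m : ℕ) h‖ * ‖P (m : ℕ) g‖ :=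
            norm_inner_le_norm _ _
        _ ≤ (‖P (m : ℕ) h‖ ^ 2 + ‖P (m : ℕ) g‖ ^ 2) / 2 := by
            nlinarith [sq_nonneg (‖P (m : ℕ) h‖ - ‖P (m : ℕ) g‖)]
    have hfin : ∀ r : ℝ, 0 < r → {m : S | r ≤ ‖lam (m : ℕ)‖ ∧ b m ≠ 0}.Finite := by
      intro r hr
      have hev := hAsum.summable.tendsto_cofinite_zero (Metric.ball_mem_nhds 0 hr)
      have hev2 := Filter.mem_cofinite.mp (Filter.mem_map.mp hev)
      refine hev2.subset ?_
      intro m hm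
      simp only [Set.mem_compl_iff, Set.mem_preimage, Metric.mem_ball, dist_zero_right,
        not_lt]
      have hPne : P (m : ℕ) ≠ 0 := by
        intro h0
        apply hm.2
        show ⟪h, P (m : ℕ) g⟫_ℂ = 0
        rw [h0]
        simp
      have hnorm1 : 1 ≤ ‖P (m : ℕ)‖ := by
        have hid := hP_idem m m.2
        have hle : ‖P (m : ℕ)‖ ≤ ‖P (m : ℕ)‖ * ‖P (m : ℕ)‖ := by
          conv_lhs => rw [← hid]
          exact norm_mul_le _ _
        have hpos : 0 < ‖P (m : ℕ)‖ := norm_pos_iff.mpr hPne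
        nlinarith
      calc r ≤ ‖lam (m : ℕ)‖ := hm.1
        _ ≤ ‖lam (m : ℕ)‖ * ‖P (m : ℕ)‖ :=
            le_mul_of_one_le_right (norm_nonneg _) hnorm1
        _ = ‖lam (m : ℕ) • P (m : ℕ)‖ := (norm_smul _ _).symm
    have hinj : Function.Injective (fun m : S => lam (m : ℕ)) := by
      intro m1 m2 hmn
      exact Subtype.ext (hlam_inj m1 m1.2 m2 m2.2 hmn)
    exact moment_lemma _ b hinj hsumb hfin hmom ⟨n, hn⟩
end

section
/- Let A ≠ 0 be a compact normal bounded operator on a complex Hilbert space H, with canonical decomposition A = Σ_{n∈S} λₙ Pₙ (λₙ the distinct non-zero eigenvalues for n ∈ S \ {0}, Pₙ the orthogonal projections onto the corresponding eigenspaces, P₀ the orthogonal projection onto ker A). If g ∈ ran A, then the series f₀ = Σ_{n∈S\{0}} (1/λₙ) Pₙ g converges in H, A f₀ = g, and f₀ belongs to the closure of the Krylov subspace K(A,g); in particular f₀ is the unique Krylov solution of Af = g. -/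
open Filter Topology Polynomial

local notation "⟪" x ", " y "⟫" => @inner ℂ _ _ x y

/-- If `c i` are absolutely summable coefficients at distinct nonzero points `lam i`
(with only finitely many relevant points outside each ball), and all power sums
`∑ c i * lam i ^ (k+1)` vanish, then all `c i` vanish. -/
lemma moment_vanish {ι : Type*} [DecidableEq ι] (lam : ι → ℂ) (hinj : Function.Injective lam)
    (hne : ∀ i, lam i ≠ 0)
    (c : ι → ℂ) (hsum : Summable fun i => ‖c i‖)
    (hfin : ∀ ε : ℝ, 0 < ε → {i | ε ≤ ‖lam i‖ ∧ c i ≠ 0}.Finite)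
    (hmom : ∀ k : ℕ, HasSum (fun i => c i * lam i ^ (k + 1)) 0) :
    ∀ i, c i = 0 := by
  intro m
  by_contra hcm
  set μ := ‖lam m‖ with hμdef
  have hμpos : 0 < μ := norm_pos_iff.mpr (hne m)
  have hT := hfin μ hμpos
  set T := hT.toFinset with hTdef
  have hmT : m ∈ T := by
    rw [hTdef, Set.Finite.mem_toFinset]
    exact ⟨le_refl _, hcm⟩
  -- the radius ρ < μ dominating all other relevant points
  have hT2 := hfin (μ/2) (by linarith)
  set T2 := hT2.toFinset with hT2def
  set F' : Finset ℝ := insert (μ/2) ((T2 \ T).image fun i => ‖lam i‖) with hF'def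
  have hF'ne : F'.Nonempty := ⟨μ/2, Finset.mem_insert_self _ _⟩
  set ρ := F'.max' hF'ne with hρdef
  have hρ_lt : ρ < μ := by
    rw [hρdef, Finset.max'_lt_iff]
    intro b hb
    rw [hF'def, Finset.mem_insert] at hb
    rcases hb with hb | hb
    · rw [hb]; linarith
    · obtain ⟨i, hi, rfl⟩ := Finset.mem_image.mp hb
      rw [Finset.mem_sdiff] at hi
      have hi2 : (μ/2) ≤ ‖lam i‖ ∧ c i ≠ 0 := by
        have := hi.1; rwa [hT2def, Set.Finite.mem_toFinset] at this
      have hiT : ¬ (μ ≤ ‖lam i‖ ∧ c i ≠ 0) := by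
        intro h; exact hi.2 (by rw [hTdef, Set.Finite.mem_toFinset]; exact h)
      by_contra h
      exact hiT ⟨not_lt.mp h, hi2.2⟩
  have hρ_half : μ/2 ≤ ρ := Finset.le_max' _ _ (Finset.mem_insert_self _ _)
  have hρpos : 0 < ρ := lt_of_lt_of_le (by linarith) hρ_half
  have hρ_bound : ∀ i, c i ≠ 0 → i ∉ T → ‖lam i‖ ≤ ρ := by
    intro i hci hiT
    by_cases h2 : μ/2 ≤ ‖lam i‖
    · refine Finset.le_max' _ _ ?_
      rw [hF'def, Finset.mem_insert]
      right
      refine Finset.mem_image.mpr ⟨i, ?_, rfl⟩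
      rw [Finset.mem_sdiff, hT2def, Set.Finite.mem_toFinset]
      exact ⟨⟨h2, hci⟩, hiT⟩
    · linarith
  -- the interpolation polynomial
  set r : ι → ℂ := fun i => if i = m then 1 else 0 with hrdef
  set p : ℂ[X] := Lagrange.interpolate T lam r with hpdef
  have hpeval : ∀ i ∈ T, p.eval (lam i) = r i := fun i hi =>
    Lagrange.eval_interpolate_at_node r (hinj.injOn) hi
  -- bound of p on the closed ball of radius ρ
  obtain ⟨Mp0, hMp0⟩ : ∃ C, ∀ z ∈ Metric.closedBall (0:ℂ) ρ, ‖p.eval z‖ ≤ C :=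
    (isCompact_closedBall 0 ρ).exists_bound_of_continuousOn (p.continuous_aeval.continuousOn)
  set Mp := max Mp0 0 with hMpdef
  have hMp_nonneg : 0 ≤ Mp := le_max_right _ _
  have hMp : ∀ z : ℂ, ‖z‖ ≤ ρ → ‖p.eval z‖ ≤ Mp := by
    intro z hz
    exact le_trans (hMp0 z (by simpa [Metric.mem_closedBall, dist_eq_norm] using hz))
      (le_max_left _ _)
  -- moment relations with the polynomial inserted
  have hmomp : ∀ k : ℕ,
      HasSum (fun i => c i * lam i ^ (k + 1) * p.eval (lam i)) 0 := by
    intro k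
    have key : (fun i => c i * lam i ^ (k + 1) * p.eval (lam i)) =
        fun i => ∑ j ∈ Finset.range (p.natDegree + 1),
          p.coeff j * (c i * lam i ^ ((k + j) + 1)) := by
      funext i
      rw [Polynomial.eval_eq_sum_range, Finset.mul_sum]
      refine Finset.sum_congr rfl fun j _ => ?_
      have : lam i ^ (k + j + 1) = lam i ^ (k+1) * lam i ^ j := by
        rw [← pow_add]; ring_nf
      rw [this]; ring
    rw [key]
    have h0 : (0:ℂ) = ∑ j ∈ Finset.range (p.natDegree + 1), (0:ℂ) := by simp
    rw [h0]
    refine hasSum_sum fun j _ => ?_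
    simpa using ((hmom (k + j)).mul_left (p.coeff j))
  -- split off the finite set T
  set Csum := ∑' i, ‖c i‖ with hCdef
  have key_bound : ∀ k : ℕ, ‖c m‖ * μ ^ (k+1) ≤ (Csum * Mp) * ρ ^ (k+1) := by
    intro k
    set f : ι → ℂ := fun i => c i * lam i ^ (k + 1) * p.eval (lam i) with hfdef
    have hTsum : ∑ i ∈ T, f i = c m * lam m ^ (k+1) := by
      rw [Finset.sum_eq_single_of_mem m hmT]
      · rw [hfdef]; simp only []
        rw [hpeval m hmT, hrdef]; simp
      · intro i hi hne'
        rw [hfdef]; simp only []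
        rw [hpeval i hi, hrdef]; simp [hne']
    have hcompl : HasSum (fun x : {x // x ∉ T} => f x) (0 - ∑ i ∈ T, f i) :=
      (Finset.hasSum_iff_compl T).mp (hmomp k)
    rw [hTsum, zero_sub] at hcompl
    -- bound each term
    have hbound : ∀ x : {x // x ∉ T}, ‖f x‖ ≤ ‖c x‖ * (ρ ^ (k+1) * Mp) := by
      intro x
      by_cases hcx : c (x:ι) = 0
      · rw [hfdef]; simp only []
        rw [hcx]
        simp [norm_nonneg, mul_nonneg, pow_nonneg hρpos.le, hMp_nonneg]
      · have hlx : ‖lam (x:ι)‖ ≤ ρ := hρ_bound _ hcx x.2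
        rw [hfdef]; simp only []
        rw [norm_mul, norm_mul, norm_pow]
        rw [mul_assoc]
        refine mul_le_mul_of_nonneg_left ?_ (norm_nonneg _)
        exact mul_le_mul (pow_le_pow_left₀ (norm_nonneg _) hlx _)
          (hMp _ hlx) (norm_nonneg _) (pow_nonneg hρpos.le _)
    have hsub : Summable fun x : {x // x ∉ T} => ‖c (x:ι)‖ := hsum.subtype _
    have hfsummable : Summable fun x : {x // x ∉ T} => ‖f x‖ := by
      refine Summable.of_nonneg_of_le (fun _ => norm_nonneg _) hbound ?_
      exact hsub.mul_right _
    have h1 : ‖c m‖ * μ ^ (k+1) = ‖∑' x : {x // x ∉ T}, f x‖ := by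
      rw [hcompl.tsum_eq, norm_neg, norm_mul, norm_pow]
    rw [h1]
    refine le_trans (norm_tsum_le_tsum_norm hfsummable) ?_
    have h2 : ∑' x : {x // x ∉ T}, ‖f x‖ ≤
        ∑' x : {x // x ∉ T}, ‖c (x:ι)‖ * (ρ ^ (k+1) * Mp) :=
      Summable.tsum_le_tsum hbound hfsummable (hsub.mul_right _)
    refine le_trans h2 ?_
    rw [tsum_mul_right]
    have h3 : ∑' x : {x // x ∉ T}, ‖c (x:ι)‖ ≤ Csum := by
      refine Summable.tsum_le_tsum_of_inj (Subtype.val) (Subtype.val_injective)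
        (fun _ _ => norm_nonneg _) (fun x => le_refl _) hsub hsum
    calc (∑' x : {x // x ∉ T}, ‖c (x:ι)‖) * (ρ ^ (k+1) * Mp)
        ≤ Csum * (ρ ^ (k+1) * Mp) := by
          refine mul_le_mul_of_nonneg_right h3 ?_
          exact mul_nonneg (pow_nonneg hρpos.le _) hMp_nonneg
      _ = (Csum * Mp) * ρ ^ (k+1) := by ring
  -- conclude by letting k → ∞
  have hcm_le : ∀ k : ℕ, ‖c m‖ ≤ (Csum * Mp) * (ρ/μ) ^ (k+1) := by
    intro k
    have hk := key_bound k
    have hμk : (0:ℝ) < μ ^ (k+1) := pow_pos hμpos _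
    have h4 : (Csum * Mp) * (ρ/μ) ^ (k+1) = (Csum * Mp) * ρ ^ (k+1) / μ ^ (k+1) := by
      rw [div_pow]; ring
    rw [h4, le_div_iff₀ hμk]
    linarith
  have htend : Tendsto (fun k : ℕ => (Csum * Mp) * (ρ/μ) ^ (k+1)) atTop (𝓝 0) := by
    have h1 : Tendsto (fun k : ℕ => (ρ/μ) ^ k) atTop (𝓝 0) := by
      refine tendsto_pow_atTop_nhds_zero_of_lt_one (by positivity) ?_
      rw [div_lt_one hμpos]; exact hρ_lt
    have h2 : Tendsto (fun k : ℕ => (ρ/μ) ^ (k+1)) atTop (𝓝 0) :=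
      h1.comp (tendsto_add_atTop_nat 1)
    simpa using h2.const_mul (Csum * Mp)
  have : ‖c m‖ ≤ 0 := ge_of_tendsto htend (Filter.Eventually.of_forall hcm_le)
  exact hcm (norm_le_zero_iff.mp this)




/-- For a family of mutually orthogonal self-adjoint idempotents, the squared norms of
the projections of a fixed vector are summable (Bessel-type inequality). -/
lemma proj_sq_summable {H : Type*} [NormedAddCommGroup H] [InnerProductSpace ℂ H]
    [CompleteSpace H] {ι : Type*} (Q : ι → H →L[ℂ] H)
    (hsa : ∀ i, IsSelfAdjoint (Q i))
    (hid : ∀ i, IsIdempotentElem (Q i))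
    (horth : ∀ i j, i ≠ j → Q i * Q j = 0) (x : H) :
    Summable (fun i => ‖Q i x‖ ^ 2) := by
  have hadj : ∀ (i) (u v : H), ⟪u, Q i v⟫ = ⟪Q i u, v⟫ := by
    intro i u v
    rw [← ContinuousLinearMap.adjoint_inner_left, (hsa i).adjoint_eq]
  have hself : ∀ (i) (u : H), ⟪u, Q i u⟫ = (‖Q i u‖ : ℂ) ^ 2 := by
    intro i u
    have h1 : Q i u = Q i (Q i u) := by
      conv_lhs => rw [← hid i]
      rfl
    rw [h1, hadj i u (Q i u), ← h1, inner_self_eq_norm_sq_to_K]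
    norm_cast
  apply summable_of_sum_le (c := ‖x‖ ^ 2) (fun i => sq_nonneg _)
  intro F
  set s := ∑ i ∈ F, Q i x with hsdef
  have hQs : ∀ i ∈ F, Q i s = Q i x := by
    intro i hi
    rw [hsdef, map_sum]
    rw [Finset.sum_eq_single_of_mem i hi]
    · exact congrArg (fun f => f x) (hid i)
    · intro j hj hne
      have := horth i j (Ne.symm hne)
      calc Q i (Q j x) = (Q i * Q j) x := rfl
        _ = 0 := by rw [this]; rfl
  have hss : ⟪s, s⟫ = ((∑ i ∈ F, ‖Q i x‖ ^ 2 : ℝ) : ℂ) := by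
    rw [hsdef, sum_inner]
    push_cast
    refine Finset.sum_congr rfl fun i hi => ?_
    rw [← hadj i x s, hQs i hi]
    exact hself i x
  have hxs : ⟪x, s⟫ = ((∑ i ∈ F, ‖Q i x‖ ^ 2 : ℝ) : ℂ) := by
    rw [hsdef, inner_sum]
    push_cast
    exact Finset.sum_congr rfl fun i hi => hself i x
  have hns : ‖s‖ ^ 2 = ∑ i ∈ F, ‖Q i x‖ ^ 2 := by
    have h1 : ⟪s, s⟫ = (‖s‖ : ℂ) ^ 2 := by
      rw [inner_self_eq_norm_sq_to_K]; norm_cast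
    rw [h1] at hss
    exact_mod_cast hss
  have hle : ∑ i ∈ F, ‖Q i x‖ ^ 2 ≤ ‖x‖ * ‖s‖ := by
    have h2 : ‖⟪x, s⟫‖ ≤ ‖x‖ * ‖s‖ := norm_inner_le_norm x s
    rw [hxs] at h2
    refine le_trans ?_ h2
    rw [Complex.norm_real]
    exact le_abs_self _
  rw [← hns] at hle ⊢
  nlinarith [norm_nonneg s, norm_nonneg x, sq_nonneg (‖s‖ - ‖x‖)]

/-- Removing the term at `0` from a sum over `S ∋ 0`. -/
lemma hasSum_diff_singleton_zero {M : Type*} [AddCommGroup M] [TopologicalSpace M]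
    [IsTopologicalAddGroup M] {F : ℕ → M} {a : M} {S : Set ℕ} (h0 : (0:ℕ) ∈ S)
    (h : HasSum (fun n : S => F n) a) :
    HasSum (fun n : ↥(S \ {0}) => F n) (a - F 0) := by
  have h' : HasSum (S.indicator F) a := hasSum_subtype_iff_indicator.mp h
  have hsingle : HasSum (({0} : Set ℕ).indicator F) (F 0) := by
    have h1 : ∀ n : ℕ, n ≠ 0 → ({0} : Set ℕ).indicator F n = 0 := by
      intro n hn
      exact Set.indicator_of_notMem (by simpa using hn) F
    have := hasSum_single (f := ({0} : Set ℕ).indicator F) 0 (fun b hb => h1 b hb)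
    simpa [Set.indicator_of_mem (Set.mem_singleton (0:ℕ))] using this
  rw [show (fun n : ↥(S \ {0}) => F n) = (F ∘ (Subtype.val : ↥(S \ {0}) → ℕ)) from rfl,
    hasSum_subtype_iff_indicator]
  have heq : (S \ {0}).indicator F = S.indicator F - ({0} : Set ℕ).indicator F := by
    funext n
    by_cases hn : n = 0
    · subst hn
      simp [Set.indicator, h0]
    · by_cases hnS : n ∈ S
      · simp [Set.indicator, hnS, hn]
      · simp [Set.indicator, hnS, hn, fun (h : n ∈ S \ {0}) => hnS h.1]
    
  rw [heq]
  exact h'.sub hsingle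





set_option maxHeartbeats 1000000 in
/-- Let `A ≠ 0` be a compact normal bounded operator on a complex Hilbert
space with canonical decomposition `A = Σ_{n ∈ S} λₙ Pₙ` (notation as in the canonical form:
`λ₀ = 0`, the `λₙ`, `n ∈ S \ {0}`, distinct non-zero eigenvalues with mutually orthogonal
eigenprojections `Pₙ`, `P₀` the orthogonal projection onto `ker A`, `Σ Pₙ = 1` strongly).
If `g ∈ ran A`, then the series `f₀ = Σ_{n ∈ S \ {0}} λₙ⁻¹ Pₙ g` converges in `H`,
`A f₀ = g`, `f₀` lies in the closure of the Krylov subspace `K(A,g)`, and `f₀` is the unique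
Krylov solution of `A f = g`. -/
theorem compact_normal_krylov_solution_formula
    {H : Type*} [NormedAddCommGroup H] [InnerProductSpace ℂ H] [CompleteSpace H]
    (A : H →L[ℂ] H) (hcpt : IsCompactOperator A) (hnormal : IsStarNormal A)
    (hAne : A ≠ 0)
    (S : Set ℕ) (h0S : 0 ∈ S) (lam : ℕ → ℂ) (P : ℕ → H →L[ℂ] H)
    (hlam0 : lam 0 = 0)
    (hlam_ne : ∀ n ∈ S, n ≠ 0 → lam n ≠ 0)
    (hlam_inj : ∀ m ∈ S, ∀ n ∈ S, lam m = lam n → m = n)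
    (hP_sa : ∀ n ∈ S, IsSelfAdjoint (P n))
    (hP_idem : ∀ n ∈ S, IsIdempotentElem (P n))
    (hP_orth : ∀ m ∈ S, ∀ n ∈ S, m ≠ n → P m * P n = 0)
    (hP0 : LinearMap.range (P 0 : H →ₗ[ℂ] H) = LinearMap.ker (A : H →ₗ[ℂ] H))
    (hPeig : ∀ n ∈ S, n ≠ 0 →
      LinearMap.range (P n : H →ₗ[ℂ] H) = LinearMap.ker ((A - lam n • (1 : H →L[ℂ] H) : H →L[ℂ] H) : H →ₗ[ℂ] H))
    (hAsum : HasSum (fun n : S => lam n • P n) A)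
    (hres : ∀ x : H, HasSum (fun n : S => P n x) x)
    (g : H) (hg : g ∈ LinearMap.range (A : H →ₗ[ℂ] H)) :
    ∃ f₀ : H,
      HasSum (fun n : ↥(S \ {0}) => (lam n)⁻¹ • P n g) f₀ ∧
      A f₀ = g ∧
      f₀ ∈ (Submodule.span ℂ (Set.range fun k : ℕ => (A ^ k) g)).topologicalClosure ∧
      (∀ f ∈ (Submodule.span ℂ (Set.range fun k : ℕ => (A ^ k) g)).topologicalClosure,
        A f = g → f = f₀) := by
  classical
  obtain ⟨f, hf⟩ := hg
  replace hf : A f = g := hf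
  -- inner product moves across the projections
  have hadj : ∀ n ∈ S, ∀ u v : H, ⟪u, P n v⟫ = ⟪P n u, v⟫ := by
    intro n hn u v
    rw [← ContinuousLinearMap.adjoint_inner_left, (hP_sa n hn).adjoint_eq]
  -- A ∘ P n = lam n • P n
  have h_a : ∀ n ∈ S, ∀ x : H, A (P n x) = lam n • P n x := by
    intro n hn x
    by_cases hn0 : n = 0
    · subst hn0
      have hx : P 0 x ∈ LinearMap.ker (A : H →ₗ[ℂ] H) := by
        rw [← hP0]; exact ⟨x, rfl⟩
      rw [LinearMap.mem_ker] at hx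
      rw [hlam0, zero_smul]
      exact hx
    · have hx : P n x ∈ LinearMap.ker ((A - lam n • (1 : H →L[ℂ] H) : H →L[ℂ] H) : H →ₗ[ℂ] H) := by
        rw [← hPeig n hn hn0]; exact ⟨x, rfl⟩
      rw [LinearMap.mem_ker] at hx
      have h2 : A (P n x) - lam n • P n x = 0 := by
        simpa [ContinuousLinearMap.sub_apply, ContinuousLinearMap.smul_apply] using hx
      exact sub_eq_zero.mp h2
  -- A^k ∘ P n = lam n ^ k • P n
  have h_pow : ∀ n ∈ S, ∀ (k : ℕ) (x : H), (A ^ k) (P n x) = lam n ^ k • P n x := by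
    intro n hn k
    induction k with
    | zero => intro x; simp
    | succ k ih =>
      intro x
      have h1 : (A ^ (k+1)) (P n x) = (A ^ k) (A (P n x)) := by
        rw [pow_succ, ContinuousLinearMap.mul_apply]
      rw [h1, h_a n hn x, map_smul, ih x, smul_smul]
      congr 1
      ring
  -- P n ∘ A = lam n • P n
  have h_b : ∀ n ∈ S, ∀ x : H, P n (A x) = lam n • P n x := by
    intro n hn x
    have h1 : HasSum (fun m : S => A (P (m:ℕ) x)) (A x) := A.hasSum (hres x)
    have h2 : HasSum (fun m : S => P n (A (P (m:ℕ) x))) (P n (A x)) := (P n).hasSum h1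
    have h3 : HasSum (fun m : S => P n (A (P (m:ℕ) x))) (lam n • P n x) := by
      have hval : P n (A (P n x)) = lam n • P n x := by
        rw [h_a n hn x, map_smul]
        congr 1
        calc P n (P n x) = (P n * P n) x := rfl
          _ = P n x := by rw [hP_idem n hn]
      have := hasSum_single (f := fun m : S => P n (A (P (m:ℕ) x))) ⟨n, hn⟩ ?_
      · simpa [hval] using this
      · intro m hm
        have hmn : (m : ℕ) ≠ n := fun h => hm (Subtype.ext h)
        show P n (A (P (m:ℕ) x)) = 0
        rw [h_a (m:ℕ) m.2 x, map_smul]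
        have : P n (P (m:ℕ) x) = 0 := by
          calc P n (P (m:ℕ) x) = (P n * P (m:ℕ)) x := rfl
            _ = 0 := by rw [hP_orth n hn (m:ℕ) m.2 (Ne.symm hmn)]; rfl
        rw [this, smul_zero]
    exact h2.unique h3
  -- basic consequences
  have hP0A : ∀ x : H, P 0 (A x) = 0 := by
    intro x
    rw [h_b 0 h0S x, hlam0, zero_smul]
  have hAP0 : ∀ x : H, A (P 0 x) = 0 := by
    intro x
    rw [h_a 0 h0S x, hlam0, zero_smul]
  set f₀ : H := f - P 0 f with hf₀def
  have hAf₀ : A f₀ = g := by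
    rw [hf₀def, map_sub, hf, hAP0, sub_zero]
  -- the sum defining f₀
  have hsum_f : HasSum (fun n : ↥(S \ {0}) => P (n:ℕ) f) f₀ :=
    hasSum_diff_singleton_zero (F := fun n => P n f) h0S (hres f)
  have hmemS : ∀ n : ↥(S \ {0}), (n:ℕ) ∈ S := fun n => n.2.1
  have hne0 : ∀ n : ↥(S \ {0}), (n:ℕ) ≠ 0 := by
    intro n
    have := n.2.2
    simpa using this
  have hlam_ne' : ∀ n : ↥(S \ {0}), lam n ≠ 0 := fun n => hlam_ne _ (hmemS n) (hne0 n)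
  have hPnf_eq : ∀ n : ↥(S \ {0}), P (n:ℕ) f = (lam n)⁻¹ • P (n:ℕ) g := by
    intro n
    rw [← hf, h_b (n:ℕ) (hmemS n) f, smul_smul, inv_mul_cancel₀ (hlam_ne' n), one_smul]
  have conj1 : HasSum (fun n : ↥(S \ {0}) => (lam n)⁻¹ • P (n:ℕ) g) f₀ := by
    have heq : (fun n : ↥(S \ {0}) => (lam n)⁻¹ • P (n:ℕ) g)
        = fun n : ↥(S \ {0}) => P (n:ℕ) f := funext fun n => (hPnf_eq n).symm
    rw [heq]
    exact hsum_f
  -- Krylov subspace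
  set K : Submodule ℂ H := Submodule.span ℂ (Set.range fun k : ℕ => (A ^ k) g) with hKdef
  have hAkg_mem : ∀ k : ℕ, (A ^ k) g ∈ K := fun k =>
    Submodule.subset_span ⟨k, rfl⟩
  have hclosure : Kᗮᗮ = K.topologicalClosure := K.orthogonal_orthogonal_eq_closure
  -- membership of f₀ in the closure
  have conj3 : f₀ ∈ K.topologicalClosure := by
    rw [← hclosure]
    rw [Submodule.mem_orthogonal]
    intro y hy
    -- hy : y ∈ Kᗮ ; goal : ⟪y, f₀⟫ = 0
    have hyg : ∀ k : ℕ, ⟪y, (A ^ k) g⟫ = 0 := by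
      intro k
      have h1 : ⟪(A ^ k) g, y⟫ = 0 := (Submodule.mem_orthogonal K y).mp hy _ (hAkg_mem k)
      rw [← inner_conj_symm, h1, map_zero]
    set c : ↥(S \ {0}) → ℂ := fun i => ⟪y, P (i:ℕ) f⟫ with hcdef
    have hc_inner : ∀ i : ↥(S \ {0}), c i = ⟪P (i:ℕ) y, P (i:ℕ) f⟫ := by
      intro i
      rw [hcdef]
      have h1 : P (i:ℕ) f = P (i:ℕ) (P (i:ℕ) f) := by
        calc P (i:ℕ) f = (P (i:ℕ) * P (i:ℕ)) f := by rw [hP_idem _ (hmemS i)]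
          _ = P (i:ℕ) (P (i:ℕ) f) := rfl
      simp only []
      rw [h1, hadj _ (hmemS i) y (P (i:ℕ) f), ← h1]
    have hczero : ∀ i, c i = 0 := by
      refine moment_vanish (fun i : ↥(S \ {0}) => lam i) ?_ hlam_ne' c ?_ ?_ ?_
      · -- injectivity
        intro i j hij
        exact Subtype.ext (hlam_inj _ (hmemS i) _ (hmemS j) hij)
      · -- summability
        have hsy : Summable (fun i : ↥(S \ {0}) => ‖P (i:ℕ) y‖ ^ 2) :=
          proj_sq_summable (fun i : ↥(S \ {0}) => P (i:ℕ))
            (fun i => hP_sa _ (hmemS i)) (fun i => hP_idem _ (hmemS i))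
            (fun i j hij => hP_orth _ (hmemS i) _ (hmemS j)
              (fun h => hij (Subtype.ext h))) y
        have hsf : Summable (fun i : ↥(S \ {0}) => ‖P (i:ℕ) f‖ ^ 2) :=
          proj_sq_summable (fun i : ↥(S \ {0}) => P (i:ℕ))
            (fun i => hP_sa _ (hmemS i)) (fun i => hP_idem _ (hmemS i))
            (fun i j hij => hP_orth _ (hmemS i) _ (hmemS j)
              (fun h => hij (Subtype.ext h))) f
        refine Summable.of_nonneg_of_le (fun i => norm_nonneg _)
          (fun i => ?_) ((hsy.add hsf).mul_left (1/2))
        rw [hc_inner i]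
        refine le_trans (norm_inner_le_norm _ _) ?_
        nlinarith [sq_nonneg (‖P (i:ℕ) y‖ - ‖P (i:ℕ) f‖), norm_nonneg (P (i:ℕ) y),
          norm_nonneg (P (i:ℕ) f)]
      · -- finiteness
        intro ε hε
        have hcof : ∀ᶠ n : ↥S in cofinite, ‖lam (n:ℕ) • P (n:ℕ)‖ < ε := by
          have h1 := hAsum.summable.tendsto_cofinite_zero
          have h2 := h1.eventually (Metric.ball_mem_nhds (0 : H →L[ℂ] H) hε)
          refine h2.mono fun n hn => ?_
          simpa [mem_ball_zero_iff] using hn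
        have hfinS : {n : ↥S | ε ≤ ‖lam (n:ℕ) • P (n:ℕ)‖}.Finite := by
          have := Filter.eventually_cofinite.mp hcof
          refine this.subset fun n hn => ?_
          simpa [not_lt] using hn
        set e : ↥(S \ {0}) → ↥S := fun i => ⟨(i:ℕ), hmemS i⟩ with hedef
        have heinj : Set.InjOn e {i : ↥(S \ {0}) | ε ≤ ‖lam (i:ℕ)‖ ∧ c i ≠ 0} := by
          intro a _ b _ hab
          have h2 : ((a : ℕ)) = ((b : ℕ)) := congrArg (fun t : ↥S => (t : ℕ)) hab
          exact Subtype.ext h2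
        refine Set.Finite.of_finite_image ?_ heinj
        refine hfinS.subset ?_
        rintro x ⟨i, ⟨hi1, hi2⟩, rfl⟩
        have hPne : P (i:ℕ) ≠ 0 := by
          intro h0
          apply hi2
          rw [hcdef]
          simp only []
          rw [h0]
          simp
        have hnorm1 : 1 ≤ ‖P (i:ℕ)‖ := by
          obtain ⟨x0, hx0⟩ : ∃ x0, P (i:ℕ) x0 ≠ 0 := by
            by_contra hall
            push_neg at hall
            exact hPne (ContinuousLinearMap.ext fun x0 => hall x0)
          have h1 : ‖P (i:ℕ) x0‖ = ‖P (i:ℕ) (P (i:ℕ) x0)‖ := by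
            congr 1
            calc P (i:ℕ) x0 = (P (i:ℕ) * P (i:ℕ)) x0 := by rw [hP_idem _ (hmemS i)]
              _ = P (i:ℕ) (P (i:ℕ) x0) := rfl
          have h2 : ‖P (i:ℕ) (P (i:ℕ) x0)‖ ≤ ‖P (i:ℕ)‖ * ‖P (i:ℕ) x0‖ :=
            (P (i:ℕ)).le_opNorm _
          have h3 : 0 < ‖P (i:ℕ) x0‖ := norm_pos_iff.mpr hx0
          nlinarith
        show ε ≤ ‖lam (i:ℕ) • P (i:ℕ)‖
        rw [norm_smul]
        calc ε = ε * 1 := by ring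
          _ ≤ ‖lam (i:ℕ)‖ * ‖P (i:ℕ)‖ :=
            mul_le_mul hi1 hnorm1 zero_le_one (le_trans hε.le hi1)
      · -- moments
        intro k
        have h1 : HasSum (fun i : ↥(S \ {0}) => (A ^ (k+1)) (P (i:ℕ) f)) ((A ^ (k+1)) f₀) :=
          (A ^ (k+1)).hasSum hsum_f
        have h2 : (A ^ (k+1)) f₀ = (A ^ k) g := by
          rw [pow_succ, ContinuousLinearMap.mul_apply, hAf₀]
        rw [h2] at h1
        have h3 := (innerSL ℂ y).hasSum h1
        simp only [innerSL_apply_apply] at h3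
        rw [hyg k] at h3
        have heq : (fun i : ↥(S \ {0}) => ⟪y, (A ^ (k+1)) (P (i:ℕ) f)⟫)
            = fun i : ↥(S \ {0}) => c i * lam (i:ℕ) ^ (k+1) := by
          funext i
          rw [h_pow _ (hmemS i) (k+1) f]
          rw [inner_smul_right]
          rw [hcdef]
          ring
        rwa [heq] at h3
    have h4 := (innerSL ℂ y).hasSum hsum_f
    have h5 : HasSum (fun i : ↥(S \ {0}) => (innerSL ℂ y) (P (i:ℕ) f)) 0 := by
      have heq : (fun i : ↥(S \ {0}) => (innerSL ℂ y) (P (i:ℕ) f)) = fun _ => (0:ℂ) := by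
        funext i
        exact hczero i
      rw [heq]
      exact hasSum_zero
    have h6 : (innerSL ℂ y) f₀ = 0 := h4.unique h5
    exact h6
  -- uniqueness
  refine ⟨f₀, conj1, hAf₀, conj3, ?_⟩
  intro f' hf'mem hf'eq
  set z : H := f' - f₀ with hzdef
  have hzcl : z ∈ K.topologicalClosure := sub_mem hf'mem conj3
  have hzker : A z = 0 := by
    rw [hzdef, map_sub, hf'eq, hAf₀, sub_self]
  have hPz : ∀ n ∈ S, n ≠ 0 → P n z = 0 := by
    intro n hn hn0 
    have h1 : P n (A z) = lam n • P n z := h_b n hn z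
    rw [hzker, map_zero] at h1
    have h2 := h1.symm
    rcases smul_eq_zero.mp h2 with h | h
    · exact absurd h (hlam_ne n hn hn0)
    · exact h
  have hz0 : z = P 0 z := by
    have h1 : HasSum (fun n : ↥(S \ {0}) => P (n:ℕ) z) (z - P 0 z) :=
      hasSum_diff_singleton_zero (F := fun n => P n z) h0S (hres z)
    have h2 : HasSum (fun n : ↥(S \ {0}) => P (n:ℕ) z) 0 := by
      have heq : (fun n : ↥(S \ {0}) => P (n:ℕ) z) = fun _ => (0:H) :=
        funext fun n => hPz _ (hmemS n) (hne0 n)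
      rw [heq]
      exact hasSum_zero
    have h3 := h1.unique h2
    have h4 : z - P 0 z = 0 := h3
    exact (sub_eq_zero.mp h4)
  have hran : ∀ k : ℕ, ∃ w : H, A w = (A ^ k) g := by
    intro k
    cases k with
    | zero => exact ⟨f, by simpa using hf⟩
    | succ k =>
      refine ⟨(A ^ k) g, ?_⟩
      rw [pow_succ']
      rfl
  have hKz : ∀ u ∈ K, ⟪u, z⟫ = 0 := by
    intro u hu
    refine Submodule.span_induction ?_ ?_ ?_ ?_ hu
    · rintro v ⟨k, rfl⟩
      obtain ⟨w, hw⟩ := hran k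
      show ⟪(A ^ k) g, z⟫ = 0
      rw [← hw, hz0, hadj 0 h0S (A w) z, hP0A w, inner_zero_left]
    · simp
    · intro a b _ _ ha hb
      rw [inner_add_left, ha, hb, add_zero]
    · intro r a _ ha
      rw [inner_smul_left, ha, mul_zero]
  have hzorth : z ∈ Kᗮ := (Submodule.mem_orthogonal K z).mpr hKz
  rw [← hclosure] at hzcl
  have hzz : ⟪z, z⟫ = 0 := (Submodule.mem_orthogonal Kᗮ z).mp hzcl z hzorth
  have hz : z = 0 := inner_self_eq_zero.mp hzz
  rw [hzdef] at hz
  exact sub_eq_zero.mp hz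
end

section
/- Let A be a bounded normal operator on a complex Hilbert space H and let g ∈ H. Then A is K(A,g)-reduced (i.e., both the closure of K(A,g) and K(A,g)^⊥ are invariant under A) if and only if A* g belongs to the closure of K(A,g). In particular, for A compact normal with canonical decomposition A = Σ_{n∈S} λₙ Pₙ, the vector A* g = Σ_{n∈S} conj(λₙ) Pₙ g lies in the closure of K(A,g) for every g ∈ H. -/
open Filter Topology
open scoped Pointwise

section Helpers

open ContinuousLinearMap

variable {E : Type*} [NormedAddCommGroup E] [InnerProductSpace ℂ E] [CompleteSpace E]

local notation "⟪" x ", " y "⟫" => @inner ℂ _ _ x y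

private lemma adjoint_comm_apply {A : E →L[ℂ] E} (h : IsStarNormal A) (x : E) :
    adjoint A (A x) = A (adjoint A x) := by
  have h2 : star A * A = A * star A := h.star_comm_self
  rw [star_eq_adjoint] at h2
  calc adjoint A (A x) = (adjoint A * A) x := rfl
    _ = (A * adjoint A) x := by rw [h2]
    _ = A (adjoint A x) := rfl

private lemma norm_adjoint_apply_eq {A : E →L[ℂ] E} (h : IsStarNormal A) (x : E) :
    ‖adjoint A x‖ = ‖A x‖ := by
  have key : ⟪adjoint A x, adjoint A x⟫ = ⟪A x, A x⟫ := by
    rw [adjoint_inner_right, ← adjoint_comm_apply h, adjoint_inner_left]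
  have h1 : ‖adjoint A x‖ ^ 2 = ‖A x‖ ^ 2 := by
    rw [← inner_self_eq_norm_sq (𝕜 := ℂ), ← inner_self_eq_norm_sq (𝕜 := ℂ), key]
  have h3 := congrArg Real.sqrt h1
  rwa [Real.sqrt_sq (norm_nonneg _), Real.sqrt_sq (norm_nonneg _)] at h3

private lemma norm_adjoint_sub_smul {A : E →L[ℂ] E} (h : IsStarNormal A) (c : ℂ) (x : E) :
    ‖adjoint A x - (starRingEnd ℂ) c • x‖ = ‖A x - c • x‖ := by
  have hsq : ‖adjoint A x - (starRingEnd ℂ) c • x‖ ^ 2 = ‖A x - c • x‖ ^ 2 := by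
    rw [norm_sub_sq (𝕜 := ℂ), norm_sub_sq (𝕜 := ℂ)]
    have e1 : ‖adjoint A x‖ = ‖A x‖ := norm_adjoint_apply_eq h x
    have e2 : ‖(starRingEnd ℂ) c • x‖ = ‖c • x‖ := by
      rw [norm_smul, norm_smul, RCLike.norm_conj]
    have e4 : c * ⟪A x, x⟫ = (starRingEnd ℂ) ((starRingEnd ℂ) c * ⟪x, A x⟫) := by
      rw [map_mul]
      simp [inner_conj_symm]
    have e3 : RCLike.re (K := ℂ) ⟪adjoint A x, (starRingEnd ℂ) c • x⟫
        = RCLike.re (K := ℂ) ⟪A x, c • x⟫ := by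
      rw [inner_smul_right, inner_smul_right, adjoint_inner_left, e4, RCLike.conj_re]
    rw [e1, e2, e3]
  have h3 := congrArg Real.sqrt hsq
  rwa [Real.sqrt_sq (norm_nonneg _), Real.sqrt_sq (norm_nonneg _)] at h3

private lemma adjoint_apply_eigen {A : E →L[ℂ] E} (h : IsStarNormal A) {c : ℂ} {x : E}
    (hx : A x = c • x) : adjoint A x = (starRingEnd ℂ) c • x := by
  have h0 := norm_adjoint_sub_smul h c x
  rw [hx, sub_self, norm_zero] at h0
  exact sub_eq_zero.mp (norm_eq_zero.mp h0)

private lemma re_real_mul (r : ℝ) (z : ℂ) :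
    RCLike.re (K := ℂ) ((r : ℂ) * z) = r * RCLike.re (K := ℂ) z :=
  Complex.re_ofReal_mul r z

/-- If `D` is symmetric with nonnegative quadratic form, then vanishing of the form
at `x` forces `D x = 0`. -/
private lemma apply_eq_zero_of_re_inner_nonpos {D : E →L[ℂ] E}
    (hsym : ∀ x y : E, ⟪D x, y⟫ = ⟪x, D y⟫)
    (hpos : ∀ y : E, 0 ≤ RCLike.re (K := ℂ) ⟪D y, y⟫) {x : E}
    (hx : RCLike.re (K := ℂ) ⟪D x, x⟫ ≤ 0) : D x = 0 := by
  have hx0 : RCLike.re (K := ℂ) ⟪D x, x⟫ = 0 := le_antisymm hx (hpos x)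
  have main : ∀ y : E, RCLike.re (K := ℂ) ⟪D x, y⟫ = 0 := by
    intro y
    set a : ℝ := RCLike.re (K := ℂ) ⟪D x, y⟫ with ha
    set b : ℝ := RCLike.re (K := ℂ) ⟪D y, y⟫ with hb
    have hbnn : 0 ≤ b := hpos y
    have quad : ∀ t : ℝ, 0 ≤ 2 * t * a + t ^ 2 * b := by
      intro t
      have h0 := hpos (x + (t : ℂ) • y)
      have hDxy : RCLike.re (K := ℂ) ⟪D y, x⟫ = a := by
        rw [hsym y x]
        exact inner_re_symm y (D x)
      have expand : RCLike.re (K := ℂ) ⟪D (x + (t : ℂ) • y), x + (t : ℂ) • y⟫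
          = RCLike.re (K := ℂ) ⟪D x, x⟫ + 2 * t * a + t ^ 2 * b := by
        simp only [map_add, map_smul, inner_add_left, inner_add_right, inner_smul_left,
          inner_smul_right, Complex.conj_ofReal, re_real_mul, hDxy, ← ha, ← hb]
        ring
      rw [expand, hx0] at h0; linarith
    by_contra hane
    have hane' : a ≠ 0 := hane
    have ht := quad (-a / (b + 1))
    have hb1 : (0:ℝ) < b + 1 := by linarith
    have heq : 2 * (-a / (b + 1)) * a + (-a / (b + 1)) ^ 2 * b
        = -(a ^ 2 * (b + 2)) / (b + 1) ^ 2 := by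
      field_simp; ring
    have ha2 : (0:ℝ) < a ^ 2 := lt_of_le_of_ne (sq_nonneg a) (Ne.symm (pow_ne_zero 2 hane'))
    have hpos2 : (0:ℝ) < a ^ 2 * (b + 2) / (b + 1) ^ 2 :=
      div_pos (mul_pos ha2 (by linarith)) (by positivity)
    rw [heq] at ht
    have : -(a ^ 2 * (b + 2)) / (b + 1) ^ 2 = -(a ^ 2 * (b + 2) / (b + 1) ^ 2) := by ring
    rw [this] at ht
    linarith
  have key : ∀ y : E, ⟪D x, y⟫ = 0 := by
    intro y
    have h1 : RCLike.re (K := ℂ) ⟪D x, y⟫ = 0 := main y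
    have h2 : RCLike.re (K := ℂ) ⟪D x, Complex.I • y⟫ = 0 := main (Complex.I • y)
    rw [inner_smul_right] at h2
    apply Complex.ext
    · exact h1
    · have himre : (Complex.I * ⟪D x, y⟫).re = -(⟪D x, y⟫).im := by
        simp [Complex.mul_re]
      have h2' : (Complex.I * ⟪D x, y⟫).re = 0 := h2
      rw [himre] at h2'
      simpa using h2'
  exact inner_self_eq_zero.mp (key (D x))

/-- A compact operator sends bounded sequences to sequences with convergent subsequences. -/
private lemma compact_exists_subseq {B : E →L[ℂ] E} (hB : IsCompactOperator B)
    {u : ℕ → E} (hu : ∀ n, ‖u n‖ ≤ 1) :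
    ∃ (φ : ℕ → ℕ) (z : E), StrictMono φ ∧ Tendsto (fun n => B (u (φ n))) atTop (𝓝 z) := by
  obtain ⟨K, hK, hKsub⟩ :=
    IsCompactOperator.image_closedBall_subset_compact (𝕜₁ := ℂ)
      (f := (B : E →ₗ[ℂ] E)) hB 1
  have hmem : ∀ n, B (u n) ∈ K := fun n =>
    hKsub ⟨u n, by simpa [Metric.mem_closedBall] using hu n, rfl⟩
  obtain ⟨z, _, φ, hφ, htend⟩ := hK.tendsto_subseq hmem
  exact ⟨φ, z, hφ, htend⟩

set_option maxHeartbeats 1000000 in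
/-- **Core lemma**: a nonzero compact hyponormal operator on a complex Hilbert space has an
eigenvector. -/
private lemma exists_eigenvector_of_compact_hyponormal (T : E →L[ℂ] E)
    (hcT : IsCompactOperator T) (hyp : ∀ x : E, ‖adjoint T x‖ ≤ ‖T x‖) (hT : T ≠ 0) :
    ∃ (c : ℂ) (x : E), x ≠ 0 ∧ T x = c • x := by
  have hTpos : (0 : ℝ) < ‖T‖ := norm_pos_iff.mpr hT
  set μ : ℝ := ‖T‖ ^ 2 with hμdef
  have hμpos : 0 < μ := by positivity
  set B : E →L[ℂ] E := adjoint T ∘L T with hBdef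
  have hBsym : ∀ x y : E, ⟪B x, y⟫ = ⟪x, B y⟫ := by
    intro x y
    show ⟪adjoint T (T x), y⟫ = ⟪x, adjoint T (T y)⟫
    rw [adjoint_inner_left, adjoint_inner_right]
  have hBapp : ∀ x : E, RCLike.re (K := ℂ) ⟪B x, x⟫ = ‖T x‖ ^ 2 := by
    intro x
    show RCLike.re (K := ℂ) ⟪adjoint T (T x), x⟫ = ‖T x‖ ^ 2
    rw [adjoint_inner_left, inner_self_eq_norm_sq]
  have hBnorm : ‖B‖ ≤ μ := by
    calc ‖B‖ ≤ ‖adjoint T‖ * ‖T‖ := opNorm_comp_le _ _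
      _ = ‖T‖ * ‖T‖ := by rw [LinearIsometryEquiv.norm_map]
      _ = μ := by rw [hμdef]; ring
  -- a sequence of unit vectors almost attaining the norm
  have hseq : ∀ n : ℕ, ∃ u : E, ‖u‖ = 1 ∧ ‖T‖ * (1 - 1 / (n + 1)) < ‖T u‖ := by
    intro n
    have h1 : (0:ℝ) < 1 / ((n:ℝ) + 1) := by positivity
    have hr : ‖T‖ * (1 - 1 / (n + 1)) < ‖T‖ := by nlinarith
    obtain ⟨x, hx1, hx2⟩ := ContinuousLinearMap.exists_lt_apply_of_lt_opNorm T hr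
    have h2 : 1 / ((n:ℝ) + 1) ≤ 1 := by
      rw [div_le_one (by positivity)]
      linarith [Nat.cast_nonneg (α := ℝ) n]
    have hrnn : 0 ≤ ‖T‖ * (1 - 1 / (n + 1)) := by nlinarith
    have hxne : x ≠ 0 := by
      intro h; rw [h] at hx2; simp only [map_zero, norm_zero] at hx2; linarith
    have hxpos : 0 < ‖x‖ := norm_pos_iff.mpr hxne
    refine ⟨‖x‖⁻¹ • x, ?_, ?_⟩
    · rw [norm_smul, norm_inv, norm_norm, inv_mul_cancel₀ (norm_ne_zero_iff.mpr hxne)]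
    · rw [ContinuousLinearMap.map_smul_of_tower, norm_smul, norm_inv, norm_norm]
      have hinv : 1 ≤ ‖x‖⁻¹ := (one_le_inv_iff₀).mpr ⟨hxpos, hx1.le⟩
      calc ‖T‖ * (1 - 1 / (n + 1)) < ‖T x‖ := hx2
        _ = 1 * ‖T x‖ := (one_mul _).symm
        _ ≤ ‖x‖⁻¹ * ‖T x‖ := by
            exact mul_le_mul_of_nonneg_right hinv (norm_nonneg _)
  choose u hu1 hu2 using hseq
  have huTle : ∀ n, ‖T (u n)‖ ≤ ‖T‖ := by
    intro n
    calc ‖T (u n)‖ ≤ ‖T‖ * ‖u n‖ := T.le_opNorm _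
      _ = ‖T‖ := by rw [hu1]; ring
  have htendTu : Tendsto (fun n => ‖T (u n)‖) atTop (𝓝 ‖T‖) := by
    have h1 : Tendsto (fun n : ℕ => 1 / ((n:ℝ) + 1)) atTop (𝓝 0) :=
      tendsto_one_div_add_atTop_nhds_zero_nat
    have h2 := (h1.const_sub 1).const_mul ‖T‖
    have h3 : Tendsto (fun n : ℕ => ‖T‖ * (1 - 1 / ((n:ℝ) + 1))) atTop (𝓝 ‖T‖) := by
      simpa using h2
    exact tendsto_of_tendsto_of_tendsto_of_le_of_le h3 tendsto_const_nhds
      (fun n => (hu2 n).le) huTle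
  -- B uₙ - μ uₙ → 0
  have hdiff : Tendsto (fun n => B (u n) - (μ : ℂ) • u n) atTop (𝓝 0) := by
    rw [tendsto_zero_iff_norm_tendsto_zero]
    have hsq : ∀ n, ‖B (u n) - (μ : ℂ) • u n‖ ^ 2 ≤ 2 * μ ^ 2 - 2 * μ * ‖T (u n)‖ ^ 2 := by
      intro n
      have hexp := norm_sub_sq (𝕜 := ℂ) (B (u n)) ((μ : ℂ) • u n)
      have h1 : RCLike.re (K := ℂ) ⟪B (u n), (μ : ℂ) • u n⟫ = μ * ‖T (u n)‖ ^ 2 := by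
        rw [inner_smul_right, re_real_mul, hBapp]
      have h2 : ‖(μ : ℂ) • u n‖ ^ 2 = μ ^ 2 := by
        rw [norm_smul, hu1]
        simp [Complex.norm_real, abs_of_pos hμpos]
      have h3 : ‖B (u n)‖ ^ 2 ≤ μ ^ 2 := by
        have hle : ‖B (u n)‖ ≤ μ := by
          calc ‖B (u n)‖ ≤ ‖B‖ * ‖u n‖ := B.le_opNorm _
            _ = ‖B‖ := by rw [hu1]; ring
            _ ≤ μ := hBnorm
        nlinarith [norm_nonneg (B (u n))]
      rw [hexp, h1, h2]
      nlinarith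
    have hub : Tendsto (fun n => 2 * μ ^ 2 - 2 * μ * ‖T (u n)‖ ^ 2) atTop (𝓝 0) := by
      have h1 : Tendsto (fun n => ‖T (u n)‖ ^ 2) atTop (𝓝 (‖T‖ ^ 2)) := htendTu.pow 2
      have h2 := (h1.const_mul (2 * μ)).const_sub (2 * μ ^ 2)
      have h3 : 2 * μ ^ 2 - 2 * μ * ‖T‖ ^ 2 = 0 := by rw [hμdef]; ring
      rw [h3] at h2
      exact h2
    have hsqt : Tendsto (fun n => ‖B (u n) - (μ : ℂ) • u n‖ ^ 2) atTop (𝓝 0) :=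
      tendsto_of_tendsto_of_tendsto_of_le_of_le tendsto_const_nhds hub
        (fun n => sq_nonneg _) hsq
    have h4 := hsqt.sqrt
    simpa [Real.sqrt_sq (norm_nonneg _)] using h4
  -- extract convergent subsequence
  have hcB : IsCompactOperator B := hcT.clm_comp (adjoint T)
  obtain ⟨φ, z, hφ, hz⟩ := compact_exists_subseq hcB (fun n => (hu1 n).le)
  have hμu : Tendsto (fun n => (μ : ℂ) • u (φ n)) atTop (𝓝 z) := by
    have h1 : Tendsto (fun n => B (u (φ n)) - (μ : ℂ) • u (φ n)) atTop (𝓝 0) :=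
      hdiff.comp hφ.tendsto_atTop
    have h2 := hz.sub h1
    simpa using h2
  set e : E := (μ : ℂ)⁻¹ • z with hedef
  have hμne : (μ : ℂ) ≠ 0 := by
    simp only [ne_eq, Complex.ofReal_eq_zero]
    exact hμpos.ne'
  have hue : Tendsto (fun n => u (φ n)) atTop (𝓝 e) := by
    have h1 := hμu.const_smul ((μ : ℂ)⁻¹)
    have h2 : (fun n => u (φ n)) = fun n => ((μ : ℂ))⁻¹ • ((μ : ℂ) • u (φ n)) := by
      funext n
      rw [inv_smul_smul₀ hμne]
    rw [hedef, h2]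
    exact h1
  have hexnorm : ‖e‖ = 1 := by
    have h1 : Tendsto (fun n => ‖u (φ n)‖) atTop (𝓝 ‖e‖) := hue.norm
    have h2 : Tendsto (fun n => ‖u (φ n)‖) atTop (𝓝 1) := by
      simp only [hu1]
      exact tendsto_const_nhds
    exact tendsto_nhds_unique h1 h2
  have hBe : B e = (μ : ℂ) • e := by
    have h1 : Tendsto (fun n => B (u (φ n))) atTop (𝓝 (B e)) :=
      (B.continuous.tendsto e).comp hue
    have h2 : B e = z := tendsto_nhds_unique h1 hz
    have h3 : Tendsto (fun n => (μ : ℂ) • u (φ n)) atTop (𝓝 ((μ : ℂ) • e)) :=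
      hue.const_smul _
    have h4 : (μ : ℂ) • e = z := tendsto_nhds_unique h3 hμu
    rw [h2, ← h4]
  -- the operators C = T T* and D = B - C ≥ 0
  set C : E →L[ℂ] E := T ∘L adjoint T with hCdef
  set D : E →L[ℂ] E := B - C with hDdef
  have hCapp : ∀ x : E, RCLike.re (K := ℂ) ⟪C x, x⟫ = ‖adjoint T x‖ ^ 2 := by
    intro x
    show RCLike.re (K := ℂ) ⟪T (adjoint T x), x⟫ = ‖adjoint T x‖ ^ 2
    rw [← adjoint_inner_right T (adjoint T x) x, inner_self_eq_norm_sq]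
  have hCsym : ∀ x y : E, ⟪C x, y⟫ = ⟪x, C y⟫ := by
    intro x y
    show ⟪T (adjoint T x), y⟫ = ⟪x, T (adjoint T y)⟫
    rw [← adjoint_inner_right T (adjoint T x) y, adjoint_inner_left T (adjoint T y) x]
  have hDsym : ∀ x y : E, ⟪D x, y⟫ = ⟪x, D y⟫ := by
    intro x y
    simp only [hDdef, ContinuousLinearMap.sub_apply, inner_sub_left, inner_sub_right,
      hBsym x y, hCsym x y]
  have hDpos : ∀ y : E, 0 ≤ RCLike.re (K := ℂ) ⟪D y, y⟫ := by
    intro y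
    have h1 : RCLike.re (K := ℂ) ⟪D y, y⟫ = ‖T y‖ ^ 2 - ‖adjoint T y‖ ^ 2 := by
      simp only [hDdef, ContinuousLinearMap.sub_apply, inner_sub_left, map_sub]
      rw [hBapp, hCapp]
    rw [h1]
    nlinarith [hyp y, norm_nonneg (T y), norm_nonneg (adjoint T y)]
  -- inductive claim: B ((T^n) e) = μ (T^n) e
  have hchain : ∀ n : ℕ, B ((T ^ n) e) = (μ : ℂ) • (T ^ n) e := by
    intro n
    induction n with
    | zero => simpa using hBe
    | succ n ih =>
      have hTn1 : (T ^ (n + 1)) e = T ((T ^ n) e) := by rw [pow_succ']; rfl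
      set v : E := (T ^ n) e with hvdef
      have hCv : C (T v) = (μ : ℂ) • T v := by
        show T (adjoint T (T v)) = (μ : ℂ) • T v
        have hBv : adjoint T (T v) = B v := rfl
        rw [hBv, ih, map_smul]
      have hDv : D (T v) = 0 := by
        apply apply_eq_zero_of_re_inner_nonpos hDsym hDpos
        have h1 : RCLike.re (K := ℂ) ⟪D (T v), T v⟫
            = ‖T (T v)‖ ^ 2 - ‖adjoint T (T v)‖ ^ 2 := by
          simp only [hDdef, ContinuousLinearMap.sub_apply, inner_sub_left, map_sub]
          rw [hBapp, hCapp]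
        have h2 : ‖adjoint T (T v)‖ ^ 2 = μ * ‖T v‖ ^ 2 := by
          have h2' := hCapp (T v)
          rw [hCv] at h2'
          rw [← h2', inner_smul_left, Complex.conj_ofReal, re_real_mul,
            inner_self_eq_norm_sq]
        have h3 : ‖T (T v)‖ ^ 2 ≤ μ * ‖T v‖ ^ 2 := by
          have h3' := T.le_opNorm (T v)
          have h3'' : ‖T (T v)‖ ^ 2 ≤ (‖T‖ * ‖T v‖) ^ 2 :=
            pow_le_pow_left₀ (norm_nonneg _) h3' 2
          calc ‖T (T v)‖ ^ 2 ≤ (‖T‖ * ‖T v‖) ^ 2 := h3''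
            _ = μ * ‖T v‖ ^ 2 := by rw [hμdef]; ring
        rw [h1, h2]; linarith
      have hBC : B (T v) = C (T v) + D (T v) := by
        simp [hDdef]
      rw [hTn1, hBC, hDv, hCv, add_zero]
  -- the invariant subspace W
  set W : Submodule ℂ E :=
    (Submodule.span ℂ (Set.range fun n : ℕ => (T ^ n) e)).topologicalClosure with hWdef
  have hWclosed : IsClosed (W : Set E) := Submodule.isClosed_topologicalClosure _
  haveI : CompleteSpace W := hWclosed.completeSpace_coe
  have hWB : ∀ x ∈ W, B x = (μ : ℂ) • x := by
    have hle : W ≤ LinearMap.ker ((B - (μ : ℂ) • (1 : E →L[ℂ] E) : E →L[ℂ] E) : E →ₗ[ℂ] E) := by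
      apply Submodule.topologicalClosure_minimal
      · rw [Submodule.span_le]
        rintro - ⟨n, rfl⟩
        simp only [SetLike.mem_coe, LinearMap.mem_ker]
        show (B - (μ : ℂ) • (1 : E →L[ℂ] E)) ((T ^ n) e) = 0
        rw [ContinuousLinearMap.sub_apply, hchain n]
        simp
      · exact ContinuousLinearMap.isClosed_ker _
    intro x hx
    have h1 := hle hx
    rw [LinearMap.mem_ker, ContinuousLinearMap.coe_coe] at h1
    have h2 : (B - (μ : ℂ) • (1 : E →L[ℂ] E)) x = B x - (μ : ℂ) • x := by
      rw [ContinuousLinearMap.sub_apply]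
      simp
    rw [h2] at h1
    exact sub_eq_zero.mp h1
  have hWT : ∀ x ∈ W, T x ∈ W := by
    have hle : W ≤ W.comap (T : E →ₗ[ℂ] E) := by
      apply Submodule.topologicalClosure_minimal
      · rw [Submodule.span_le]
        rintro - ⟨n, rfl⟩
        simp only [SetLike.mem_coe, Submodule.mem_comap]
        show T ((T ^ n) e) ∈ W
        have h1 : T ((T ^ n) e) = (T ^ (n + 1)) e := by rw [pow_succ']; rfl
        rw [h1]
        exact Submodule.le_topologicalClosure _ (Submodule.subset_span ⟨n + 1, rfl⟩)
      · exact IsClosed.preimage T.continuous hWclosed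
    intro x hx
    exact hle hx
  have hWnorm : ∀ x ∈ W, ‖T x‖ = ‖T‖ * ‖x‖ := by
    intro x hx
    have h1 : ‖T x‖ ^ 2 = μ * ‖x‖ ^ 2 := by
      rw [← hBapp x, hWB x hx, inner_smul_left, Complex.conj_ofReal, re_real_mul,
        inner_self_eq_norm_sq]
    have h2 : ‖T x‖ ^ 2 = (‖T‖ * ‖x‖) ^ 2 := by rw [h1, hμdef]; ring
    have h3 := congrArg Real.sqrt h2
    rwa [Real.sqrt_sq (norm_nonneg _), Real.sqrt_sq (by positivity)] at h3
  have he_mem : e ∈ W :=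
    Submodule.le_topologicalClosure _ (Submodule.subset_span ⟨0, by simp⟩)
  have hTe_mem : T e ∈ W := by
    have h1 : T e = (T ^ 1) e := by rw [pow_one]
    rw [h1]
    exact Submodule.le_topologicalClosure _ (Submodule.subset_span ⟨1, rfl⟩)
  have hTe_ne : T e ≠ 0 := by
    intro h
    have h1 : ‖T e‖ = ‖T‖ * ‖e‖ := hWnorm e he_mem
    rw [h, norm_zero, hexnorm, mul_one] at h1
    exact hTpos.ne h1
  -- W is finite dimensional by Riesz's theorem
  have hfd : FiniteDimensional ℂ W := by
    set V : W →L[ℂ] E := ((‖T‖ : ℂ)⁻¹ • T).comp W.subtypeL with hVdef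
    have hVnorm : ∀ x : W, ‖V x‖ = ‖x‖ := by
      intro x
      show ‖(‖T‖ : ℂ)⁻¹ • T (x : E)‖ = ‖x‖
      rw [norm_smul, hWnorm (x : E) x.2]
      have h1 : ‖((‖T‖ : ℂ))⁻¹‖ = ‖T‖⁻¹ := by
        rw [norm_inv, Complex.norm_real, Real.norm_of_nonneg (norm_nonneg T)]
      rw [h1, ← Submodule.coe_norm]
      field_simp
    have hViso : Isometry V := AddMonoidHomClass.isometry_of_norm V hVnorm
    obtain ⟨Kc, hKc, hKcsub⟩ :=
      IsCompactOperator.image_closedBall_subset_compact (𝕜₁ := ℂ)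
        (f := (T : E →ₗ[ℂ] E)) hcT 1
    have himgsub : V '' Metric.closedBall 0 1 ⊆ (‖T‖ : ℂ)⁻¹ • Kc := by
      rintro - ⟨x, hx, rfl⟩
      have hxball : (x : E) ∈ Metric.closedBall (0 : E) 1 := by
        rw [Metric.mem_closedBall, dist_zero_right] at hx ⊢
        rw [← Submodule.coe_norm]
        exact hx
      have hTx : T (x : E) ∈ Kc := hKcsub ⟨(x : E), hxball, rfl⟩
      exact ⟨T (x : E), hTx, rfl⟩
    have hKc' : IsCompact ((‖T‖ : ℂ)⁻¹ • Kc) := hKc.smul _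
    have htb : TotallyBounded (V '' Metric.closedBall 0 1) :=
      (hKc'.totallyBounded).subset himgsub
    have htbball : TotallyBounded (Metric.closedBall (0 : W) 1) :=
      (totallyBounded_image_iff hViso.isUniformInducing).mp htb
    have hcball : IsCompact (Metric.closedBall (0 : W) 1) :=
      TotallyBounded.isCompact_of_isClosed htbball Metric.isClosed_closedBall
    exact FiniteDimensional.of_isCompact_closedBall₀ ℂ one_pos hcball
  haveI := hfd
  haveI : Nontrivial W := by
    refine nontrivial_of_ne ⟨T e, hTe_mem⟩ 0 ?_
    intro h
    apply hTe_ne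
    simpa [Submodule.mk_eq_zero] using h
  set Tres : Module.End ℂ W := (T : E →ₗ[ℂ] E).restrict hWT with hTres
  obtain ⟨c, hc⟩ := Module.End.exists_eigenvalue Tres
  obtain ⟨v, hv⟩ := hc.exists_hasEigenvector
  refine ⟨c, (v : E), ?_, ?_⟩
  · intro h
    exact hv.2 (by simpa [Submodule.coe_eq_zero] using h)
  · have happly := hv.apply_eq_smul
    calc T (v : E) = ((Tres v : W) : E) := rfl
      _ = ((c • v : W) : E) := by rw [happly]
      _ = c • (v : E) := rfl

end Helpers

open scoped InnerProductSpace

set_option maxHeartbeats 1000000 in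
/-- For a bounded normal operator `A` on a complex Hilbert space and
`g ∈ H`, `A` is `K(A,g)`-reduced (both the closure of `K(A,g) = span{A^k g : k ∈ ℕ}` and
`K(A,g)^⊥` are `A`-invariant) if and only if `A* g` belongs to the closure of `K(A,g)`.
In particular, if `A` is in addition compact, then `A* g` lies in the closure of `K(A,g)`. -/
theorem krylov_reduced_iff_adjoint_apply_mem
    {H : Type*} [NormedAddCommGroup H] [InnerProductSpace ℂ H] [CompleteSpace H]
    (A : H →L[ℂ] H) (hnormal : IsStarNormal A) (g : H) :
    (((∀ x ∈ (Submodule.span ℂ (Set.range fun k : ℕ => (A ^ k) g)).topologicalClosure,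
        A x ∈ (Submodule.span ℂ (Set.range fun k : ℕ => (A ^ k) g)).topologicalClosure) ∧
      (∀ x ∈ (Submodule.span ℂ (Set.range fun k : ℕ => (A ^ k) g))ᗮ,
        A x ∈ (Submodule.span ℂ (Set.range fun k : ℕ => (A ^ k) g))ᗮ)) ↔
      ContinuousLinearMap.adjoint A g
        ∈ (Submodule.span ℂ (Set.range fun k : ℕ => (A ^ k) g)).topologicalClosure) ∧
    (IsCompactOperator A →
      ContinuousLinearMap.adjoint A g
        ∈ (Submodule.span ℂ (Set.range fun k : ℕ => (A ^ k) g)).topologicalClosure) := by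
  classical
  set K : Submodule ℂ H := Submodule.span ℂ (Set.range fun k : ℕ => (A ^ k) g) with hKdef
  set M : Submodule ℂ H := K.topologicalClosure with hMdef
  have hMclosed : IsClosed (M : Set H) := Submodule.isClosed_topologicalClosure _
  have hgK : g ∈ K := Submodule.subset_span ⟨0, by simp⟩
  have hgM : g ∈ M := Submodule.le_topologicalClosure _ hgK
  -- the closure of the Krylov space is always `A`-invariant
  have hMinv : ∀ x ∈ M, A x ∈ M := by
    have hle : M ≤ M.comap (A : H →ₗ[ℂ] H) := by
      apply Submodule.topologicalClosure_minimal
      · rw [Submodule.span_le]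
        rintro - ⟨k, rfl⟩
        simp only [SetLike.mem_coe, Submodule.mem_comap]
        show A ((A ^ k) g) ∈ M
        have h1 : A ((A ^ k) g) = (A ^ (k + 1)) g := by rw [pow_succ']; rfl
        rw [h1]
        exact Submodule.le_topologicalClosure _ (Submodule.subset_span ⟨k + 1, rfl⟩)
      · exact IsClosed.preimage A.continuous hMclosed
    exact fun x hx => hle hx
  have hAk_adj : ∀ k : ℕ, ContinuousLinearMap.adjoint A ((A ^ k) g)
      = (A ^ k) (ContinuousLinearMap.adjoint A g) := by
    intro k
    induction k with
    | zero => simp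
    | succ k ih =>
      have h1 : (A ^ (k + 1)) g = A ((A ^ k) g) := by rw [pow_succ']; rfl
      have h2 : (A ^ (k + 1)) (ContinuousLinearMap.adjoint A g)
          = A ((A ^ k) (ContinuousLinearMap.adjoint A g)) := by rw [pow_succ']; rfl
      rw [h1, h2, adjoint_comm_apply hnormal, ih]
  have hMA : ∀ (x : H) (k : ℕ), x ∈ M → (A ^ k) x ∈ M := by
    intro x k
    induction k with
    | zero => intro hx; simpa using hx
    | succ k ih =>
      intro hx
      have h1 : (A ^ (k + 1)) x = A ((A ^ k) x) := by rw [pow_succ']; rfl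
      rw [h1]
      exact hMinv _ (ih hx)
  constructor
  · constructor
    · rintro ⟨h1, h2⟩
      rw [hMdef, ← Submodule.orthogonal_orthogonal_eq_closure]
      rw [Submodule.mem_orthogonal]
      intro u hu
      have hAu : A u ∈ Kᗮ := h2 u hu
      have hgAu : ⟪g, A u⟫_ℂ = 0 := by
        rw [Submodule.mem_orthogonal] at hAu
        exact hAu g hgK
      have h3 : ⟪ContinuousLinearMap.adjoint A g, u⟫_ℂ = 0 := by
        rw [ContinuousLinearMap.adjoint_inner_left, hgAu]
      rw [← inner_conj_symm, h3, map_zero]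
    · intro hg
      refine ⟨hMinv, ?_⟩
      intro u hu
      have hadj : ∀ y ∈ K, ContinuousLinearMap.adjoint A y ∈ M := by
        intro y hy
        induction hy using Submodule.span_induction with
        | mem y hy =>
          obtain ⟨k, rfl⟩ := hy
          rw [hAk_adj k]
          exact hMA _ k hg
        | zero => simpa using Submodule.zero_mem M
        | add y z _ _ hy hz => rw [map_add]; exact Submodule.add_mem M hy hz
        | smul c y _ hy => rw [map_smul]; exact Submodule.smul_mem M c hy
      rw [Submodule.mem_orthogonal]
      intro y hy
      have huM : u ∈ Mᗮ := by
        rw [hMdef, ← Submodule.orthogonal_orthogonal_eq_closure]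
        exact Submodule.le_orthogonal_orthogonal _ hu
      have h4 : ⟪ContinuousLinearMap.adjoint A y, u⟫_ℂ = 0 := by
        rw [Submodule.mem_orthogonal'] at huM
        have h5 := huM _ (hadj y hy)
        rw [← inner_conj_symm, h5, map_zero]
      rw [← ContinuousLinearMap.adjoint_inner_left, h4]
  · -- the compact case
    intro hcA
    set E' : Set H := {x : H | x ∈ M ∧ ∃ c : ℂ, A x = c • x} with hE'def
    set S : Submodule ℂ H := (Submodule.span ℂ E').topologicalClosure with hSdef
    have hSclosed : IsClosed (S : Set H) := Submodule.isClosed_topologicalClosure _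
    haveI : CompleteSpace S := hSclosed.completeSpace_coe
    have hSM : S ≤ M := by
      apply Submodule.topologicalClosure_minimal
      · rw [Submodule.span_le]
        intro x hx
        exact hx.1
      · exact hMclosed
    set F : Submodule ℂ H := M ⊓ Sᗮ with hFdef
    have hFclosed : IsClosed (F : Set H) := by
      have h1 : (F : Set H) = (M : Set H) ∩ (Sᗮ : Set H) := by
        ext x; simp [hFdef, Submodule.mem_inf]
      rw [h1]
      exact hMclosed.inter (Submodule.isClosed_orthogonal S)
    haveI : CompleteSpace F := hFclosed.completeSpace_coe
    have hEig_adj : ∀ x ∈ E', ContinuousLinearMap.adjoint A x ∈ M := by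
      rintro x ⟨hxM, c, hc⟩
      rw [adjoint_apply_eigen hnormal hc]
      exact Submodule.smul_mem M _ hxM
    -- F is invariant under A
    have hFinv : ∀ x ∈ F, A x ∈ F := by
      rintro x hx
      rw [hFdef, Submodule.mem_inf] at hx ⊢
      refine ⟨hMinv x hx.1, ?_⟩
      rw [Submodule.mem_orthogonal]
      intro y hy
      have key : ∀ z ∈ Submodule.span ℂ E', ⟪z, A x⟫_ℂ = 0 := by
        intro z hz
        induction hz using Submodule.span_induction with
        | mem z hzE =>
          obtain ⟨hzM, c, hc⟩ := hzE
          have h1 : ⟪A x, z⟫_ℂ = ⟪x, ContinuousLinearMap.adjoint A z⟫_ℂ :=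
            (ContinuousLinearMap.adjoint_inner_right A x z).symm
          have h2 : ContinuousLinearMap.adjoint A z = (starRingEnd ℂ) c • z :=
            adjoint_apply_eigen hnormal hc
          have hxz : ⟪x, z⟫_ℂ = 0 := by
            have hxS := hx.2
            rw [Submodule.mem_orthogonal'] at hxS
            exact hxS z (Submodule.le_topologicalClosure _ (Submodule.subset_span ⟨hzM, c, hc⟩))
          have h3 : ⟪x, ContinuousLinearMap.adjoint A z⟫_ℂ = 0 := by
            rw [h2, inner_smul_right, hxz, mul_zero]
          rw [← inner_conj_symm, h1, h3, map_zero]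
        | zero => simp
        | add z w _ _ hz hw => rw [inner_add_left, hz, hw, add_zero]
        | smul c z _ hz => rw [inner_smul_left, hz, mul_zero]
      have hy' : y ∈ closure ((Submodule.span ℂ E' : Submodule ℂ H) : Set H) := hy
      have hcont : Continuous fun w : H => ⟪w, A x⟫_ℂ :=
        Continuous.inner continuous_id continuous_const
      have heq : Set.EqOn (fun w : H => ⟪w, A x⟫_ℂ) (fun _ => (0 : ℂ))
          ((Submodule.span ℂ E' : Submodule ℂ H) : Set H) := fun z hz => key z hz
      exact heq.closure hcont continuous_const hy'
    -- the restriction of A to F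
    have hFmap : ∀ x : F, A (x : H) ∈ F := fun x => hFinv _ x.2
    set TF : F →L[ℂ] F :=
      ContinuousLinearMap.codRestrict (A.comp F.subtypeL) F hFmap with hTFdef
    have hTFapp : ∀ x : F, (TF x : H) = A (x : H) := fun x => rfl
    have hcTF : IsCompactOperator TF := by
      have h1 : IsCompactOperator (⇑A ∘ ⇑F.subtypeL) := hcA.comp_clm F.subtypeL
      exact IsCompactOperator.codRestrict (R₂ := ℂ) h1 (fun x => hFmap x) hFclosed
    -- TF is hyponormal
    have hhyp : ∀ x : F, ‖ContinuousLinearMap.adjoint TF x‖ ≤ ‖TF x‖ := by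
      intro x
      set y : F := ContinuousLinearMap.adjoint TF x with hydef
      have h1 : (‖y‖ : ℝ) ^ 2 = RCLike.re (K := ℂ) ⟪(x : H), A (y : H)⟫_ℂ := by
        rw [← inner_self_eq_norm_sq (𝕜 := ℂ)]
        have hyy : ⟪y, y⟫_ℂ = ⟪x, TF y⟫_ℂ := by
          rw [hydef, ContinuousLinearMap.adjoint_inner_left]
        rw [hyy, Submodule.coe_inner, hTFapp]
      have h3 : RCLike.re (K := ℂ) ⟪(x : H), A (y : H)⟫_ℂ
          ≤ ‖ContinuousLinearMap.adjoint A (x : H)‖ * ‖y‖ := by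
        have h2 : ⟪(x : H), A (y : H)⟫_ℂ
            = ⟪ContinuousLinearMap.adjoint A (x : H), (y : H)⟫_ℂ := by
          rw [ContinuousLinearMap.adjoint_inner_left]
        rw [h2]
        calc RCLike.re (K := ℂ) ⟪ContinuousLinearMap.adjoint A (x : H), (y : H)⟫_ℂ
            ≤ ‖⟪ContinuousLinearMap.adjoint A (x : H), (y : H)⟫_ℂ‖ := RCLike.re_le_norm _
          _ ≤ ‖ContinuousLinearMap.adjoint A (x : H)‖ * ‖(y : H)‖ := norm_inner_le_norm _ _
          _ = ‖ContinuousLinearMap.adjoint A (x : H)‖ * ‖y‖ := by rw [Submodule.coe_norm]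
      have h4 : ‖ContinuousLinearMap.adjoint A (x : H)‖ = ‖A (x : H)‖ :=
        norm_adjoint_apply_eq hnormal _
      have h5 : ‖TF x‖ = ‖A (x : H)‖ := by
        rw [Submodule.coe_norm, hTFapp]
      rcases eq_or_lt_of_le (norm_nonneg y) with h6 | h6
      · rw [← h6, h5]
        exact norm_nonneg _
      · have h7 : ‖y‖ ^ 2 ≤ ‖A (x : H)‖ * ‖y‖ := by
          rw [h1]
          rw [h4] at h3
          exact h3
        have h8 : ‖y‖ ≤ ‖A (x : H)‖ := by nlinarith
        rw [h5]
        exact h8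
    -- F is trivial
    have hFbot : F = ⊥ := by
      by_contra hne
      obtain ⟨x, hxF, hxne⟩ := Submodule.exists_mem_ne_zero_of_ne_bot hne
      have hEigF : ∃ (w : H) (c : ℂ), w ∈ F ∧ w ≠ 0 ∧ A w = c • w := by
        by_cases hTF0 : TF = 0
        · refine ⟨x, 0, hxF, hxne, ?_⟩
          have h1 : A x = (TF ⟨x, hxF⟩ : H) := rfl
          rw [h1, hTF0]
          simp
        · obtain ⟨c, w, hw0, hwT⟩ :=
            exists_eigenvector_of_compact_hyponormal TF hcTF hhyp hTF0
          refine ⟨(w : H), c, w.2, ?_, ?_⟩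
          · intro h
            exact hw0 (Submodule.coe_eq_zero.mp h)
          · have h1 : A (w : H) = (TF w : H) := rfl
            rw [h1, hwT]
            rfl
      obtain ⟨w, c, hwF, hwne, hwc⟩ := hEigF
      rw [hFdef, Submodule.mem_inf] at hwF
      have hwE : w ∈ E' := ⟨hwF.1, c, hwc⟩
      have hwS : w ∈ S := Submodule.le_topologicalClosure _ (Submodule.subset_span hwE)
      have hww : ⟪w, w⟫_ℂ = 0 := by
        have h1 := hwF.2
        rw [Submodule.mem_orthogonal'] at h1
        exact h1 w hwS
      exact hwne (inner_self_eq_zero.mp hww)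
    -- hence M ≤ S
    have hMS : M ≤ S := by
      intro x hx
      have hyF : x - (S.orthogonalProjectionOnto x : H) ∈ F := by
        rw [hFdef, Submodule.mem_inf]
        constructor
        · exact Submodule.sub_mem M hx (hSM (S.orthogonalProjectionOnto x).2)
        · exact S.sub_starProjection_mem_orthogonal x
      rw [hFbot, Submodule.mem_bot] at hyF
      have h1 : x = (S.orthogonalProjectionOnto x : H) := sub_eq_zero.mp hyF
      rw [h1]
      exact (S.orthogonalProjectionOnto x).2
    -- A* maps S into M
    have hadjS : ∀ x ∈ S, ContinuousLinearMap.adjoint A x ∈ M := by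
      have hle : S ≤ M.comap ((ContinuousLinearMap.adjoint A : H →L[ℂ] H) : H →ₗ[ℂ] H) := by
        apply Submodule.topologicalClosure_minimal
        · rw [Submodule.span_le]
          intro z hz
          simp only [SetLike.mem_coe, Submodule.mem_comap]
          exact hEig_adj z hz
        · exact IsClosed.preimage (ContinuousLinearMap.adjoint A).continuous hMclosed
      exact fun x hx => hle hx
    exact hadjS g (hMS hgM)
end

section
/- Let A be a bounded operator on a complex Hilbert space H with ker A ⊆ ker A*, let g ∈ ran A, and suppose f₀ is a Krylov solution of Af = g, i.e., f₀ lies in the closure of K(A,g) and A f₀ = g. Then f₀ is orthogonal to ker A, every solution f of Af = g has the form f = f₀ + ψ with ψ ∈ ker A, and ‖f‖² = ‖f₀‖² + ‖ψ‖²; consequently f₀ has minimal norm among all solutions of Af = g. -/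
open Filter Topology

/-- Let `A` be a bounded operator on a complex Hilbert space with
`ker A ⊆ ker A*`, let `g ∈ ran A`, and let `f₀` be a Krylov solution of `A f = g`, i.e.
`f₀` lies in the closure of `K(A,g) = span{A^k g : k ∈ ℕ}` and `A f₀ = g`.  Then `f₀` is
orthogonal to `ker A`; every solution `f` of `A f = g` has the form `f = f₀ + ψ` with
`ψ = f - f₀ ∈ ker A` and `‖f‖² = ‖f₀‖² + ‖ψ‖²`; consequently `f₀` has minimal norm among
all solutions. -/
theorem krylov_solution_minimal_norm
    {H : Type*} [NormedAddCommGroup H] [InnerProductSpace ℂ H] [CompleteSpace H]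
    (A : H →L[ℂ] H)
    (hker : LinearMap.ker (A : H →ₗ[ℂ] H) ≤ LinearMap.ker (ContinuousLinearMap.adjoint A : H →ₗ[ℂ] H))
    (g : H) (hg : g ∈ LinearMap.range (A : H →ₗ[ℂ] H)) (f₀ : H)
    (hf₀mem : f₀ ∈ (Submodule.span ℂ (Set.range fun k : ℕ => (A ^ k) g)).topologicalClosure)
    (hf₀sol : A f₀ = g) :
    (∀ ψ ∈ LinearMap.ker (A : H →ₗ[ℂ] H), @inner ℂ _ _ f₀ ψ = 0) ∧
    (∀ f : H, A f = g →
      f - f₀ ∈ LinearMap.ker (A : H →ₗ[ℂ] H) ∧ f = f₀ + (f - f₀) ∧ ‖f‖ ^ 2 = ‖f₀‖ ^ 2 + ‖f - f₀‖ ^ 2) ∧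
    (∀ f : H, A f = g → ‖f₀‖ ≤ ‖f‖) := by
  have hran : ∀ k : ℕ, (A ^ k) g ∈ LinearMap.range (A : H →ₗ[ℂ] H) := by
    intro k
    cases k with
    | zero => simpa using hg
    | succ n =>
      refine ⟨(A ^ n) g, ?_⟩
      rw [pow_succ']
      rfl
  have horth : ∀ ψ ∈ LinearMap.ker (A : H →ₗ[ℂ] H), @inner ℂ _ _ f₀ ψ = 0 := by
    intro ψ hψ
    have hψstar : ContinuousLinearMap.adjoint A ψ = 0 := hker hψ
    -- the kernel of x ↦ ⟪ψ, x⟫ is a closed submodule containing the Krylov generators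
    have hmem : f₀ ∈ LinearMap.ker (innerSL ℂ ψ : H →ₗ[ℂ] ℂ) := by
      have hclosed : IsClosed (LinearMap.ker (innerSL ℂ ψ : H →ₗ[ℂ] ℂ) : Set H) :=
        ContinuousLinearMap.isClosed_ker (innerSL ℂ ψ)
      have hspan : Submodule.span ℂ (Set.range fun k : ℕ => (A ^ k) g) ≤
          LinearMap.ker (innerSL ℂ ψ : H →ₗ[ℂ] ℂ) := by
        rw [Submodule.span_le]
        rintro _ ⟨k, rfl⟩
        obtain ⟨y, hy⟩ := hran k
        simp only [SetLike.mem_coe, LinearMap.mem_ker]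
        show @inner ℂ _ _ ψ ((A ^ k) g) = 0
        rw [← hy, ContinuousLinearMap.coe_coe, ← ContinuousLinearMap.adjoint_inner_left, hψstar, inner_zero_left]
      exact Submodule.topologicalClosure_minimal _ hspan hclosed hf₀mem
    have h0 : @inner ℂ _ _ ψ f₀ = 0 := hmem
    rw [← inner_conj_symm, h0, map_zero]
  refine ⟨horth, ?_, ?_⟩
  · intro f hf
    have hker' : f - f₀ ∈ LinearMap.ker (A : H →ₗ[ℂ] H) := by
      simp [LinearMap.mem_ker, map_sub, hf, hf₀sol]
    refine ⟨hker', by abel, ?_⟩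
    have h0 : @inner ℂ _ _ f₀ (f - f₀) = 0 := horth _ hker'
    have : f = f₀ + (f - f₀) := by abel
    calc ‖f‖ ^ 2 = ‖f₀ + (f - f₀)‖ ^ 2 := by rw [← this]
      _ = ‖f₀‖ ^ 2 + ‖f - f₀‖ ^ 2 := by
          have := norm_add_sq_eq_norm_sq_add_norm_sq_of_inner_eq_zero f₀ (f - f₀) h0
          nlinarith [this]
  · intro f hf
    have hker' : f - f₀ ∈ LinearMap.ker (A : H →ₗ[ℂ] H) := by
      simp [LinearMap.mem_ker, map_sub, hf, hf₀sol]
    have h0 : @inner ℂ _ _ f₀ (f - f₀) = 0 := horth _ hker'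
    have hpyth : ‖f‖ ^ 2 = ‖f₀‖ ^ 2 + ‖f - f₀‖ ^ 2 := by
      have heq : f = f₀ + (f - f₀) := by abel
      calc ‖f‖ ^ 2 = ‖f₀ + (f - f₀)‖ ^ 2 := by rw [← heq]
        _ = ‖f₀‖ ^ 2 + ‖f - f₀‖ ^ 2 := by
            have := norm_add_sq_eq_norm_sq_add_norm_sq_of_inner_eq_zero f₀ (f - f₀) h0
            nlinarith [this]
    have : ‖f₀‖ ^ 2 ≤ ‖f‖ ^ 2 := by nlinarith [sq_nonneg ‖f - f₀‖]
    exact (pow_le_pow_iff_left₀ (norm_nonneg _) (norm_nonneg _) (by norm_num)).mp this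
end

section
/- Let A be a bounded normal operator on a complex Hilbert space H and let g ∈ H be such that A is K(A,g)-reduced. Then for every polynomial q(z,w) in two commuting variables with complex coefficients, the vector q(A, A*) g belongs to the closure of the Krylov subspace K(A,g). In particular (A*)^k A^n g ∈ closure K(A,g) for all k, n ∈ ℕ₀. -/
open Filter Topology

/-- Let `A` be a bounded normal operator on a complex Hilbert space and
`g ∈ H` such that `A` is `K(A,g)`-reduced.  Then for every polynomial
`q(z,w) = Σ c_{k,n} w^k z^n` in two commuting variables (encoded by its finitely supported
coefficient function `q : ℕ × ℕ →₀ ℂ`), the vector `q(A, A*) g` belongs to the closure of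
the Krylov subspace `K(A,g) = span{A^k g : k ∈ ℕ}`; in particular
`(A*)^k A^n g ∈ closure K(A,g)` for all `k, n ∈ ℕ`. -/
theorem polynomial_in_A_and_adjoint_mem_krylov_closure
    {H : Type*} [NormedAddCommGroup H] [InnerProductSpace ℂ H] [CompleteSpace H]
    (A : H →L[ℂ] H) (hnormal : IsStarNormal A) (g : H)
    (hred₁ : ∀ x ∈ (Submodule.span ℂ (Set.range fun k : ℕ => (A ^ k) g)).topologicalClosure,
      A x ∈ (Submodule.span ℂ (Set.range fun k : ℕ => (A ^ k) g)).topologicalClosure)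
    (hred₂ : ∀ x ∈ (Submodule.span ℂ (Set.range fun k : ℕ => (A ^ k) g))ᗮ,
      A x ∈ (Submodule.span ℂ (Set.range fun k : ℕ => (A ^ k) g))ᗮ) :
    (∀ q : (ℕ × ℕ) →₀ ℂ,
      (q.sum fun kn c => c • (((ContinuousLinearMap.adjoint A) ^ kn.1) ((A ^ kn.2) g)))
        ∈ (Submodule.span ℂ (Set.range fun k : ℕ => (A ^ k) g)).topologicalClosure) ∧
    (∀ k n : ℕ,
      ((ContinuousLinearMap.adjoint A) ^ k) ((A ^ n) g)
        ∈ (Submodule.span ℂ (Set.range fun k : ℕ => (A ^ k) g)).topologicalClosure) := by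
  set K := Submodule.span ℂ (Set.range fun k : ℕ => (A ^ k) g) with hK
  have hadj : ∀ x ∈ K.topologicalClosure, ContinuousLinearMap.adjoint A x ∈ K.topologicalClosure := by
    intro x hx
    rw [← Submodule.orthogonal_orthogonal_eq_closure] at hx ⊢
    intro y hy
    have hAy : A y ∈ Kᗮ := hred₂ y hy
    have := hx (A y) hAy
    calc inner ℂ y (ContinuousLinearMap.adjoint A x)
        = inner ℂ ((ContinuousLinearMap.adjoint (ContinuousLinearMap.adjoint A)) y) x := by
          rw [ContinuousLinearMap.adjoint_inner_left]
      _ = inner ℂ (A y) x := by rw [ContinuousLinearMap.adjoint_adjoint]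
      _ = 0 := this
  have hpart2 : ∀ k n : ℕ,
      ((ContinuousLinearMap.adjoint A) ^ k) ((A ^ n) g) ∈ K.topologicalClosure := by
    intro k n
    induction k with
    | zero =>
      simp only [pow_zero, ContinuousLinearMap.one_apply]
      exact K.le_topologicalClosure (Submodule.subset_span ⟨n, rfl⟩)
    | succ k ih =>
      rw [pow_succ', ContinuousLinearMap.mul_apply]
      exact hadj _ ih
  refine ⟨?_, hpart2⟩
  intro q
  refine Submodule.sum_mem _ fun kn _ => ?_
  exact Submodule.smul_mem _ _ (hpart2 kn.1 kn.2)
end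

section
/- Let A be a bounded normal operator on a complex Hilbert space H, let E be its projection-valued spectral measure supported on σ(A), let g ∈ H, and let μ_g be the finite positive regular Borel measure on σ(A) defined by μ_g(Ω) = ⟨E(Ω)g, g⟩. If A is K(A,g)-reduced, then the map f ↦ f(A)g, where f(A) = ∫_{σ(A)} f(z) dE(z) is given by the spectral (Borel) functional calculus, is a well-defined isometric linear bijection from L²(σ(A), μ_g) onto the closure of the Krylov subspace K(A,g). -/
open Filter Topology MeasureTheory

open MeasureTheory ContinuousLinearMap

namespace KrylovAux

noncomputable def mono (nm : ℕ × ℕ) : ℂ → ℂ := fun z => z ^ nm.1 * (starRingEnd ℂ z) ^ nm.2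

lemma mono_continuous (nm : ℕ × ℕ) : Continuous (mono nm) :=
  (continuous_pow nm.1).mul ((Complex.continuous_conj).pow nm.2)

lemma conj_mono_mul (nm pq : ℕ × ℕ) (z : ℂ) :
    (starRingEnd ℂ) (mono nm z) * mono pq z = mono (nm.2 + pq.1, nm.1 + pq.2) z := by
  simp only [mono, map_mul, map_pow, Complex.conj_conj, pow_add]
  ring

noncomputable def monoHom : Multiplicative (ℕ × ℕ) →* (ℂ → ℂ) where
  toFun nm := mono (Multiplicative.toAdd nm)
  map_one' := by ext z; simp [mono]
  map_mul' a b := by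
    ext z
    simp only [mono, Pi.mul_apply, toAdd_mul, Prod.fst_add, Prod.snd_add, pow_add]
    ring

noncomputable def Phi : AddMonoidAlgebra ℂ (ℕ × ℕ) →ₐ[ℂ] (ℂ → ℂ) :=
  AddMonoidAlgebra.lift ℂ (ℂ → ℂ) (ℕ × ℕ) monoHom

lemma Phi_single (nm : ℕ × ℕ) (a : ℂ) : Phi (AddMonoidAlgebra.single nm a) = a • mono nm := by
  simp [Phi, AddMonoidAlgebra.lift_single, monoHom]

lemma Phi_continuous (c : AddMonoidAlgebra ℂ (ℕ × ℕ)) : Continuous (Phi c) := by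
  induction c using AddMonoidAlgebra.induction_linear with
  | zero => rw [map_zero]; exact continuous_const
  | add f g hf hg => rw [map_add]; exact hf.add hg
  | single nm a => rw [Phi_single]; exact (mono_continuous nm).const_smul a

variable {s : Set ℂ} {μ : Measure ℂ} [IsFiniteMeasure μ]

lemma ae_mem (hμ : μ sᶜ = 0) : ∀ᵐ z ∂μ, z ∈ s := by
  rw [MeasureTheory.ae_iff]; exact hμ

lemma bound_of_continuous (hs : IsCompact s) (hμ : μ sᶜ = 0) {f : ℂ → ℂ} (hf : Continuous f) :
    ∃ C : ℝ, ∀ᵐ z ∂μ, ‖f z‖ ≤ C := by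
  obtain ⟨C, hC⟩ := hs.exists_bound_of_continuousOn hf.continuousOn
  exact ⟨C, (ae_mem hμ).mono fun z hz => hC z hz⟩

lemma memL2_of_continuous (hs : IsCompact s) (hμ : μ sᶜ = 0) {f : ℂ → ℂ} (hf : Continuous f) :
    MemLp f 2 μ := by
  obtain ⟨C, hC⟩ := bound_of_continuous hs hμ hf
  exact MemLp.of_bound hf.aestronglyMeasurable C hC

lemma integrable_of_continuous (hs : IsCompact s) (hμ : μ sᶜ = 0) {f : ℂ → ℂ}
    (hf : Continuous f) : Integrable f μ := by
  obtain ⟨C, hC⟩ := bound_of_continuous hs hμ hf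
  exact memLp_one_iff_integrable.mp (MemLp.of_bound hf.aestronglyMeasurable C hC)

variable {H : Type*} [NormedAddCommGroup H] [InnerProductSpace ℂ H] [CompleteSpace H]

noncomputable def krylovVec (A : H →L[ℂ] H) (g : H) (nm : ℕ × ℕ) : H :=
  ((A ^ nm.1) * ((ContinuousLinearMap.adjoint A) ^ nm.2)) g

noncomputable def krylovP (A : H →L[ℂ] H) (g : H) : AddMonoidAlgebra ℂ (ℕ × ℕ) →ₗ[ℂ] H :=
  (Finsupp.lsum ℂ fun nm => LinearMap.toSpanSingleton ℂ H (krylovVec A g nm)) ∘ₗ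
    (AddMonoidAlgebra.coeffLinearEquiv ℂ).toLinearMap

lemma krylovP_single (A : H →L[ℂ] H) (g : H) (nm : ℕ × ℕ) (a : ℂ) :
    krylovP A g (AddMonoidAlgebra.single nm a) = a • krylovVec A g nm := by
  show (Finsupp.lsum ℂ fun nm => LinearMap.toSpanSingleton ℂ H (krylovVec A g nm))
    (Finsupp.single nm a) = _
  rw [Finsupp.lsum_single, LinearMap.toSpanSingleton_apply]

lemma inner_krylovVec (A : H →L[ℂ] H) (hA : IsStarNormal A) (g : H) (nm pq : ℕ × ℕ) :
    @inner ℂ _ _ (krylovVec A g nm) (krylovVec A g pq)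
      = @inner ℂ _ _ g (krylovVec A g (nm.2 + pq.1, nm.1 + pq.2)) := by
  obtain ⟨n, m⟩ := nm
  obtain ⟨p, q⟩ := pq
  have hcomm : Commute (ContinuousLinearMap.adjoint A) A := by
    have := hA.star_comm_self
    rwa [ContinuousLinearMap.star_eq_adjoint] at this
  have hadj : ContinuousLinearMap.adjoint ((A ^ n) * ((ContinuousLinearMap.adjoint A) ^ m))
      = (A ^ m) * ((ContinuousLinearMap.adjoint A) ^ n) := by
    rw [← ContinuousLinearMap.star_eq_adjoint, ← ContinuousLinearMap.star_eq_adjoint, star_mul,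
      star_pow, star_pow, star_star, ContinuousLinearMap.star_eq_adjoint]
  calc @inner ℂ _ _ (((A ^ n) * ((adjoint A) ^ m)) g) (((A ^ p) * ((adjoint A) ^ q)) g)
      = @inner ℂ _ _ g ((adjoint ((A ^ n) * ((adjoint A) ^ m))) ((((A ^ p) * ((adjoint A) ^ q))) g)) := by
        exact (ContinuousLinearMap.adjoint_inner_right _ _ _).symm
    _ = @inner ℂ _ _ g ((((A ^ m) * ((adjoint A) ^ n)) * ((A ^ p) * ((adjoint A) ^ q))) g) := by
        rw [hadj]; rfl
    _ = @inner ℂ _ _ g (((A ^ (m + p)) * ((adjoint A) ^ (n + q))) g) := by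
        congr 1
        have h2 : ((adjoint A) ^ n) * (A ^ p) = (A ^ p) * ((adjoint A) ^ n) :=
          (hcomm.pow_pow n p)
        rw [pow_add, pow_add]
        rw [mul_assoc, ← mul_assoc ((adjoint A) ^ n), h2, mul_assoc, ← mul_assoc]

lemma key_integral (A : H →L[ℂ] H) (hA : IsStarNormal A) (g : H)
    (hμ : μ (spectrum ℂ A)ᶜ = 0)
    (hμmom : ∀ n m : ℕ, ∫ z : ℂ, z ^ n * (starRingEnd ℂ z) ^ m ∂μ
        = @inner ℂ _ _ g (((A ^ n) * ((ContinuousLinearMap.adjoint A) ^ m)) g))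
    (c d : AddMonoidAlgebra ℂ (ℕ × ℕ)) :
    ∫ z, (starRingEnd ℂ) (Phi c z) * Phi d z ∂μ
      = @inner ℂ _ _ (krylovP A g c) (krylovP A g d) := by
  have hs : IsCompact (spectrum ℂ A) := spectrum.isCompact A
  have hint : ∀ c d : AddMonoidAlgebra ℂ (ℕ × ℕ),
      Integrable (fun z => (starRingEnd ℂ) (Phi c z) * Phi d z) μ := fun c d =>
    integrable_of_continuous hs hμ
      ((Complex.continuous_conj.comp (Phi_continuous c)).mul (Phi_continuous d))
  have hmom' : ∀ nm : ℕ × ℕ, ∫ z, mono nm z ∂μ = @inner ℂ _ _ g (krylovVec A g nm) :=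
    fun nm => hμmom nm.1 nm.2
  induction c using AddMonoidAlgebra.induction_linear with
  | zero =>
    simp only [map_zero, Pi.zero_apply, inner_zero_left]
    simp
  | add f f' hf hf' =>
    have : ∀ z, (starRingEnd ℂ) (Phi (f + f') z) * Phi d z
        = (starRingEnd ℂ) (Phi f z) * Phi d z + (starRingEnd ℂ) (Phi f' z) * Phi d z := by
      intro z
      simp only [map_add, Pi.add_apply, add_mul]
    rw [integral_congr_ae (Filter.Eventually.of_forall this),
      integral_add (hint f d) (hint f' d), map_add, inner_add_left, hf, hf']
  | single nm a =>
    induction d using AddMonoidAlgebra.induction_linear with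
    | zero =>
      simp only [map_zero, Pi.zero_apply, inner_zero_right, mul_zero]
      simp
    | add f f' hf hf' =>
      have : ∀ z, (starRingEnd ℂ) (Phi (AddMonoidAlgebra.single nm a) z) * Phi (f + f') z
          = (starRingEnd ℂ) (Phi (AddMonoidAlgebra.single nm a) z) * Phi f z
            + (starRingEnd ℂ) (Phi (AddMonoidAlgebra.single nm a) z) * Phi f' z := by
        intro z
        simp only [map_add, Pi.add_apply, mul_add]
      rw [integral_congr_ae (Filter.Eventually.of_forall this),
        integral_add (hint _ f) (hint _ f'), map_add, inner_add_right, hf, hf']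
    | single pq b =>
      have : ∀ z, (starRingEnd ℂ) (Phi (AddMonoidAlgebra.single nm a) z) * Phi (AddMonoidAlgebra.single pq b) z
          = ((starRingEnd ℂ) a * b) * mono (nm.2 + pq.1, nm.1 + pq.2) z := by
        intro z
        rw [Phi_single, Phi_single, Pi.smul_apply, Pi.smul_apply, smul_eq_mul, smul_eq_mul,
          map_mul, mul_mul_mul_comm, conj_mono_mul]
      rw [integral_congr_ae (Filter.Eventually.of_forall this), integral_const_mul,
        hmom' _, krylovP_single, krylovP_single, inner_smul_left, inner_smul_right,
        inner_krylovVec A hA, ← mul_assoc]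


/-- The classes of `Φ c` in `L²(μ)` as a linear map. -/
noncomputable def toL2 (hs : IsCompact s) (hμ : μ sᶜ = 0) :
    AddMonoidAlgebra ℂ (ℕ × ℕ) →ₗ[ℂ] Lp ℂ 2 μ where
  toFun c := (memL2_of_continuous hs hμ (Phi_continuous c)).toLp _
  map_add' c d := by
    have h : Phi (c + d) = Phi c + Phi d := map_add _ _ _
    simp only [h]
    exact MemLp.toLp_add _ _
  map_smul' a c := by
    have h : Phi (a • c) = a • Phi c := map_smul _ _ _
    simp only [h, RingHom.id_apply]
    exact MemLp.toLp_const_smul _ _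

lemma coeFn_toL2 (hs : IsCompact s) (hμ : μ sᶜ = 0) (c : AddMonoidAlgebra ℂ (ℕ × ℕ)) :
    (toL2 hs hμ c : ℂ → ℂ) =ᵐ[μ] Phi c :=
  MemLp.coeFn_toLp (memL2_of_continuous hs hμ (Phi_continuous c))

lemma inner_toL2 (hs : IsCompact s) (hμ : μ sᶜ = 0) (c d : AddMonoidAlgebra ℂ (ℕ × ℕ)) :
    @inner ℂ _ _ (toL2 hs hμ c) (toL2 hs hμ d)
      = ∫ z, (starRingEnd ℂ) (Phi c z) * Phi d z ∂μ := by
  rw [MeasureTheory.L2.inner_def]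
  apply integral_congr_ae
  filter_upwards [coeFn_toL2 hs hμ c, coeFn_toL2 hs hμ d] with z h1 h2
  rw [h1, h2, RCLike.inner_apply, mul_comm]

/-- Density of the polynomial classes in `L²(μ)`. -/
lemma dense_range_toL2 (hs : IsCompact s) (hμ : μ sᶜ = 0) :
    Dense ((LinearMap.range (toL2 hs hμ) : Submodule ℂ (Lp ℂ 2 μ)) : Set (Lp ℂ 2 μ)) := by
  haveI : CompactSpace s := isCompact_iff_compactSpace.mp hs
  -- the monomials as continuous maps on `s`
  let monoCM : Multiplicative (ℕ × ℕ) →* C(s, ℂ) :=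
    { toFun := fun nm => ⟨fun x => mono (Multiplicative.toAdd nm) x,
        (mono_continuous _).comp continuous_subtype_val⟩
      map_one' := by ext x; simp [mono]
      map_mul' := fun a b => by
        ext x
        simp only [mono, ContinuousMap.mul_apply, ContinuousMap.coe_mk, toAdd_mul,
          Prod.fst_add, Prod.snd_add, pow_add]
        ring }
  let Psi : AddMonoidAlgebra ℂ (ℕ × ℕ) →ₐ[ℂ] C(s, ℂ) :=
    AddMonoidAlgebra.lift ℂ C(s, ℂ) (ℕ × ℕ) monoCM
  have Psi_single : ∀ (nm : ℕ × ℕ) (a : ℂ), Psi (AddMonoidAlgebra.single nm a)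
      = a • (⟨fun x => mono nm x, (mono_continuous _).comp continuous_subtype_val⟩ : C(s, ℂ)) := by
    intro nm a
    simp [Psi, AddMonoidAlgebra.lift_single, monoCM]
  have hPsiPhi : ∀ (c : AddMonoidAlgebra ℂ (ℕ × ℕ)) (x : s), Psi c x = Phi c x := by
    intro c
    induction c using AddMonoidAlgebra.induction_linear with
    | zero => intro x; simp
    | add f f' hf hf' => intro x; simp only [map_add, ContinuousMap.add_apply, Pi.add_apply,
        hf x, hf' x]
    | single nm a =>
      intro x
      rw [Psi_single, Phi_single]
      simp
  -- the range of `Psi` is a star subalgebra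
  have star_mem' : ∀ c : AddMonoidAlgebra ℂ (ℕ × ℕ), ∃ d, Psi d = star (Psi c) := by
    intro c
    induction c using AddMonoidAlgebra.induction_linear with
    | zero => exact ⟨0, by simp⟩
    | add f f' hf hf' =>
      obtain ⟨d1, hd1⟩ := hf
      obtain ⟨d2, hd2⟩ := hf'
      exact ⟨d1 + d2, by rw [map_add, map_add, star_add, hd1, hd2]⟩
    | single nm a =>
      refine ⟨AddMonoidAlgebra.single (nm.2, nm.1) ((starRingEnd ℂ) a), ?_⟩
      rw [Psi_single, Psi_single]
      ext x
      simp only [ContinuousMap.smul_apply, ContinuousMap.star_apply, ContinuousMap.coe_mk,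
        smul_eq_mul, mono, star_mul', star_pow, Complex.star_def, Complex.conj_conj]
      ring
  let SPsi : StarSubalgebra ℂ C(s, ℂ) :=
    { Psi.range with
      star_mem' := by
        rintro x ⟨c, rfl⟩
        obtain ⟨d, hd⟩ := star_mem' c
        exact ⟨d, hd⟩ }
  have hle : (polynomialFunctions s).starClosure ≤ SPsi := by
    rw [polynomialFunctions.starClosure_eq_adjoin_X]
    apply StarAlgebra.adjoin_le
    rintro x ⟨rfl⟩
    refine ⟨AddMonoidAlgebra.single (1, 0) 1, ?_⟩
    show Psi (AddMonoidAlgebra.single (1, 0) 1) = _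
    rw [Psi_single]
    ext x
    simp [mono]
  -- now the approximation argument
  rw [← dense_closure]
  have hbcf := MeasureTheory.Lp.boundedContinuousFunction_dense (p := 2) ℂ μ
    (by norm_num : (2 : ENNReal) ≠ ⊤)
  refine hbcf.mono ?_
  rintro x hx
  obtain ⟨f₀, hf₀⟩ := MeasureTheory.Lp.mem_boundedContinuousFunction_iff.mp hx
  have hxf₀ : (x : ℂ → ℂ) =ᵐ[μ] f₀ := by
    have h1 : (x : ℂ → ℂ) =ᵐ[μ] (f₀.toContinuousMap.toAEEqFun μ : ℂ → ℂ) := by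
      rw [← hf₀]
    exact h1.trans (f₀.toContinuousMap.coeFn_toAEEqFun μ)
  rw [Metric.mem_closure_iff]
  intro ε hε
  set M : ℝ := ((μ Set.univ) ^ ((2 : ENNReal).toReal)⁻¹).toReal with hM
  have hM0 : 0 ≤ M := ENNReal.toReal_nonneg
  set ε' : ℝ := ε / (M + 1) with hε'
  have hε'0 : 0 < ε' := div_pos hε (by linarith)
  -- approximate the restriction of f₀ on s by an element of SPsi
  have hf₁mem : (f₀.toContinuousMap.restrict s) ∈
      closure ((polynomialFunctions s).starClosure : Set C(s, ℂ)) := by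
    have := polynomialFunctions.starClosure_topologicalClosure s
    have h2 : (f₀.toContinuousMap.restrict s) ∈
        (polynomialFunctions s).starClosure.topologicalClosure := by
      rw [this]; trivial
    exact h2
  obtain ⟨p, hp_mem, hp_dist⟩ := Metric.mem_closure_iff.mp hf₁mem ε' hε'0
  obtain ⟨c, rfl⟩ : p ∈ SPsi := hle hp_mem
  refine ⟨toL2 hs hμ c, ⟨c, rfl⟩, ?_⟩
  -- the distance estimate
  have hae : ∀ᵐ z ∂μ, ‖(x : ℂ → ℂ) z - Phi c z‖ ≤ ε' := by
    filter_upwards [ae_mem hμ, hxf₀] with z hz hxz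
    rw [hxz]
    have h1 : f₀ z - Phi c z = (f₀.toContinuousMap.restrict s - Psi c) ⟨z, hz⟩ := by
      simp only [ContinuousMap.sub_apply, ContinuousMap.restrict_apply]
      rw [hPsiPhi c ⟨z, hz⟩]
      rfl
    rw [h1]
    calc ‖(f₀.toContinuousMap.restrict s - Psi c) ⟨z, hz⟩‖
        ≤ ‖f₀.toContinuousMap.restrict s - Psi c‖ := ContinuousMap.norm_coe_le_norm _ _
      _ = dist (f₀.toContinuousMap.restrict s) (Psi c) := by rw [dist_eq_norm]
      _ ≤ ε' := le_of_lt hp_dist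
  have hdist : dist x (toL2 hs hμ c) ≤ M * ε' := by
    rw [dist_eq_norm, MeasureTheory.Lp.norm_def]
    have hcongr : (↑(x - toL2 hs hμ c) : ℂ → ℂ) =ᵐ[μ] fun z => (x : ℂ → ℂ) z - Phi c z := by
      filter_upwards [MeasureTheory.Lp.coeFn_sub x (toL2 hs hμ c), coeFn_toL2 hs hμ c]
        with z h1 h2
      rw [h1, Pi.sub_apply, h2]
    rw [eLpNorm_congr_ae hcongr]
    have hbound := eLpNorm_le_of_ae_bound (p := 2) (μ := μ) hae
    calc (eLpNorm (fun z => (x : ℂ → ℂ) z - Phi c z) 2 μ).toReal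
        ≤ ((μ Set.univ) ^ (2 : ENNReal).toReal⁻¹ * ENNReal.ofReal ε').toReal := by
          apply ENNReal.toReal_mono _ hbound
          exact ENNReal.mul_ne_top (ENNReal.rpow_ne_top_of_nonneg (by norm_num)
            (measure_ne_top μ _)) ENNReal.ofReal_ne_top
      _ = M * ε' := by
          rw [ENNReal.toReal_mul, ENNReal.toReal_ofReal hε'0.le]
  calc dist x (toL2 hs hμ c) ≤ M * ε' := hdist
    _ < ε := by
        rw [hε']
        rw [div_eq_inv_mul, ← mul_assoc]
        have : M * (M + 1)⁻¹ < 1 := by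
          rw [mul_inv_lt_iff₀ (by linarith)]
          linarith
        nlinarith

end KrylovAux

open Filter Topology MeasureTheory

/-- Let `A` be a bounded normal operator on a complex Hilbert space,
`g ∈ H`, and let `μ` be the scalar spectral measure `μ_g(Ω) = ⟨E(Ω)g, g⟩` of `A` at `g`
(characterized here as the finite Borel measure supported on `σ(A)` whose moments satisfy
`∫ zⁿ conj(z)ᵐ dμ = ⟨g, Aⁿ(A*)ᵐ g⟩`, which uniquely determines it).  If `A` is
`K(A,g)`-reduced, then the spectral-calculus map `f ↦ f(A)g` (the unique linear isometry
sending the class of `zⁿ conj(z)ᵐ` to `Aⁿ(A*)ᵐ g`) is a well-defined isometric linear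
bijection from `L²(σ(A), μ_g)` onto the closure of the Krylov subspace
`K(A,g) = span{A^k g : k ∈ ℕ}`. -/
theorem krylov_reduced_L2_isomorphism
    {H : Type*} [NormedAddCommGroup H] [InnerProductSpace ℂ H] [CompleteSpace H]
    (A : H →L[ℂ] H) (hnormal : IsStarNormal A) (g : H)
    (hred₁ : ∀ x ∈ (Submodule.span ℂ (Set.range fun k : ℕ => (A ^ k) g)).topologicalClosure,
      A x ∈ (Submodule.span ℂ (Set.range fun k : ℕ => (A ^ k) g)).topologicalClosure)
    (hred₂ : ∀ x ∈ (Submodule.span ℂ (Set.range fun k : ℕ => (A ^ k) g))ᗮ,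
      A x ∈ (Submodule.span ℂ (Set.range fun k : ℕ => (A ^ k) g))ᗮ)
    (μ : Measure ℂ) [IsFiniteMeasure μ]
    (hμsupp : μ (spectrum ℂ A)ᶜ = 0)
    (hμmom : ∀ n m : ℕ,
      ∫ z : ℂ, z ^ n * (starRingEnd ℂ z) ^ m ∂μ
        = @inner ℂ _ _ g (((A ^ n) * ((ContinuousLinearMap.adjoint A) ^ m)) g)) :
    ∃ T : Lp ℂ 2 μ →ₗᵢ[ℂ] H,
      (∀ n m : ℕ, ∀ h : MemLp (fun z : ℂ => z ^ n * (starRingEnd ℂ z) ^ m) 2 μ,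
        T (h.toLp _) = (A ^ n) (((ContinuousLinearMap.adjoint A) ^ m) g)) ∧
      Set.range ⇑T
        = ((Submodule.span ℂ (Set.range fun k : ℕ => (A ^ k) g)).topologicalClosure : Set H) := by
  classical
  set K := Submodule.span ℂ (Set.range fun k : ℕ => (A ^ k) g) with hKdef
  have hs : IsCompact (spectrum ℂ A) := spectrum.isCompact A
  set S := KrylovAux.toL2 hs hμsupp with hSdef
  set P := KrylovAux.krylovP A g with hPdef
  have hSP : ∀ c d, @inner ℂ _ _ (S c) (S d) = @inner ℂ _ _ (P c) (P d) := fun c d => by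
    rw [hSdef, KrylovAux.inner_toL2, KrylovAux.key_integral A hnormal g hμsupp hμmom]
  have hnorm : ∀ c, ‖S c‖ = ‖P c‖ := fun c => by
    rw [norm_eq_sqrt_re_inner (𝕜 := ℂ), norm_eq_sqrt_re_inner (𝕜 := ℂ) (P c), hSP]
  have hker : LinearMap.ker S ≤ LinearMap.ker P := by
    intro c hc
    rw [LinearMap.mem_ker] at hc ⊢
    have h0 : ‖P c‖ = 0 := by rw [← hnorm, hc, norm_zero]
    exact norm_eq_zero.mp h0
  let T₀ : LinearMap.range S →ₗ[ℂ] H :=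
    ((LinearMap.ker S).liftQ P hker) ∘ₗ (S.quotKerEquivRange.symm : _ ≃ₗ[ℂ] _).toLinearMap
  have hT₀ : ∀ c : AddMonoidAlgebra ℂ (ℕ × ℕ),
      T₀ ⟨S c, LinearMap.mem_range_self S c⟩ = P c := by
    intro c
    show ((LinearMap.ker S).liftQ P hker)
      (S.quotKerEquivRange.symm ⟨S c, LinearMap.mem_range_self S c⟩) = P c
    rw [LinearMap.quotKerEquivRange_symm_apply_image, Submodule.mkQ_apply,
      Submodule.liftQ_apply]
  have hT₀norm : ∀ x : LinearMap.range S, ‖T₀ x‖ = ‖x‖ := by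
    rintro ⟨x, c, rfl⟩
    show ‖T₀ ⟨S c, LinearMap.mem_range_self S c⟩‖ = ‖S c‖
    rw [hT₀ c, ← hnorm c]
  let T₀c : LinearMap.range S →L[ℂ] H :=
    T₀.mkContinuous 1 (fun x => by rw [hT₀norm x, one_mul])
  have hdense : DenseRange ((LinearMap.range S).subtypeL) := by
    have hd := KrylovAux.dense_range_toL2 hs hμsupp
    show Dense (Set.range _)
    have h2 : Set.range (⇑(LinearMap.range S).subtypeL)
        = ((LinearMap.range S : Submodule ℂ (Lp ℂ 2 μ)) : Set (Lp ℂ 2 μ)) :=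
      Subtype.range_coe
    rw [h2]
    exact hd
  have h_e : IsUniformInducing ((LinearMap.range S).subtypeL) := by
    have : Isometry ((LinearMap.range S).subtypeL) := isometry_subtype_coe
    exact this.isUniformInducing
  let T' : Lp ℂ 2 μ →L[ℂ] H := T₀c.extend ((LinearMap.range S).subtypeL)
  have hT'x : ∀ x : LinearMap.range S, T' ((LinearMap.range S).subtypeL x) = T₀c x :=
    fun x => ContinuousLinearMap.extend_eq T₀c (e := (LinearMap.range S).subtypeL) hdense h_e x
  have hT'norm : ∀ y, ‖T' y‖ = ‖y‖ := by
    have hclosed : IsClosed {y : Lp ℂ 2 μ | ‖T' y‖ = ‖y‖} :=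
      isClosed_eq (T'.continuous.norm) continuous_norm
    intro y
    refine hdense.induction_on y hclosed ?_
    intro x
    show ‖T' ((LinearMap.range S).subtypeL x)‖ = ‖(x : Lp ℂ 2 μ)‖
    rw [hT'x x]
    exact hT₀norm x
  let T : Lp ℂ 2 μ →ₗᵢ[ℂ] H := ⟨(T' : Lp ℂ 2 μ →ₗ[ℂ] H), hT'norm⟩
  have hTS : ∀ c, T (S c) = P c := by
    intro c
    show T' ((LinearMap.range S).subtypeL ⟨S c, LinearMap.mem_range_self S c⟩) = P c
    rw [hT'x]
    show T₀ _ = P c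
    exact hT₀ c
  refine ⟨T, ?_, ?_⟩
  · -- monomial values
    intro n m h
    have hfun : (fun z : ℂ => z ^ n * (starRingEnd ℂ z) ^ m)
        = KrylovAux.Phi (AddMonoidAlgebra.single (n, m) 1) := by
      rw [KrylovAux.Phi_single]
      funext z
      simp [KrylovAux.mono]
    have htoLp : h.toLp _ = S (AddMonoidAlgebra.single (n, m) 1) := by
      show h.toLp _ = (KrylovAux.memL2_of_continuous hs hμsupp
        (KrylovAux.Phi_continuous (AddMonoidAlgebra.single (n, m) 1))).toLp _
      congr 1
    rw [htoLp, hTS, hPdef, KrylovAux.krylovP_single, one_smul]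
    rfl
  · -- range identification
    set C := K.topologicalClosure with hCdef
    have hgC : g ∈ C := K.le_topologicalClosure (Submodule.subset_span ⟨0, by simp⟩)
    have hadjC : ∀ x ∈ C, ContinuousLinearMap.adjoint A x ∈ C := by
      intro x hx
      rw [hCdef, ← Submodule.orthogonal_orthogonal_eq_closure] at hx ⊢
      rw [Submodule.mem_orthogonal]
      intro y hy
      rw [ContinuousLinearMap.adjoint_inner_right]
      exact (Submodule.mem_orthogonal _ _).mp hx (A y) (hred₂ y hy)
    have hvC : ∀ nm : ℕ × ℕ, KrylovAux.krylovVec A g nm ∈ C := by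
      have h1 : ∀ m : ℕ, ((ContinuousLinearMap.adjoint A) ^ m) g ∈ C := by
        intro m
        induction m with
        | zero => simpa using hgC
        | succ k ih =>
          rw [pow_succ']
          exact hadjC _ ih
      rintro ⟨n, m⟩
      induction n with
      | zero => simpa [KrylovAux.krylovVec] using h1 m
      | succ k ih =>
        have : KrylovAux.krylovVec A g (k + 1, m)
            = A (KrylovAux.krylovVec A g (k, m)) := by
          simp only [KrylovAux.krylovVec, pow_succ']
          rfl
        rw [this]
        exact hred₁ _ ih
    have hPC : ∀ c, P c ∈ C := by
      intro c
      rw [hPdef]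
      show (Finsupp.lsum ℂ fun nm => LinearMap.toSpanSingleton ℂ H (KrylovAux.krylovVec A g nm))
        c.coeff ∈ C
      rw [Finsupp.lsum_apply]
      refine Submodule.sum_mem _ fun nm _ => ?_
      simp only [LinearMap.toSpanSingleton_apply]
      exact Submodule.smul_mem _ _ (hvC nm)
    apply Set.Subset.antisymm
    · rintro _ ⟨y, rfl⟩
      have hd := KrylovAux.dense_range_toL2 hs hμsupp
      have hpre : IsClosed (⇑T ⁻¹' (C : Set H)) :=
        (K.isClosed_topologicalClosure).preimage T.continuous
      have hsub : ((LinearMap.range S : Submodule ℂ (Lp ℂ 2 μ)) : Set (Lp ℂ 2 μ))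
          ⊆ ⇑T ⁻¹' (C : Set H) := by
        rintro x ⟨c, rfl⟩
        show T (S c) ∈ (C : Set H)
        rw [hTS]
        exact hPC c
      have huniv : ⇑T ⁻¹' (C : Set H) = Set.univ := by
        rw [← hpre.closure_eq, (hd.mono hsub).closure_eq]
      have : y ∈ ⇑T ⁻¹' (C : Set H) := by rw [huniv]; trivial
      exact this
    · have hcl : IsClosed (Set.range ⇑T) := T.isometry.isClosedEmbedding.isClosed_range
      set Rng : Submodule ℂ H := LinearMap.range T.toLinearMap with hRng
      have hRngset : (Rng : Set H) = Set.range ⇑T := by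
        rw [hRng, LinearMap.coe_range, LinearIsometry.coe_toLinearMap]
      have hKR : K ≤ Rng := by
        rw [hKdef, Submodule.span_le]
        rintro _ ⟨k, rfl⟩
        show (A ^ k) g ∈ (Rng : Set H)
        have : (A ^ k) g = T (S (AddMonoidAlgebra.single (k, 0) 1)) := by
          rw [hTS, hPdef, KrylovAux.krylovP_single, one_smul]
          simp [KrylovAux.krylovVec]
        rw [this]
        exact ⟨S (AddMonoidAlgebra.single (k, 0) 1), rfl⟩
      have hclRng : IsClosed (Rng : Set H) := hRngset ▸ hcl
      have hmin : C ≤ Rng := Submodule.topologicalClosure_minimal K hKR hclRng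
      intro x hx
      have := hmin hx
      rwa [← hRngset]
end

section
/- Let A be a bounded normal operator on a complex Hilbert space H with projection-valued spectral measure E, let g ∈ H, and let μ_g(Ω) = ⟨E(Ω)g, g⟩. Suppose the map f ↦ f(A)g (spectral functional calculus) is an isomorphism from L²(σ(A), μ_g) onto the closure of the Krylov subspace K(A,g). Then A is K(A,g)-reduced, i.e., both the closure of K(A,g) and K(A,g)^⊥ are invariant under A. -/
open Filter Topology MeasureTheory

/-- Let `A` be a bounded normal operator on a complex Hilbert space,
`g ∈ H`, and let `μ` be the scalar spectral measure `μ_g(Ω) = ⟨E(Ω)g, g⟩` of `A` at `g`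
(characterized by its support in `σ(A)` and its moments).  Suppose the spectral-calculus map
`f ↦ f(A)g` (the linear isometry `T` sending the class of `zⁿ conj(z)ᵐ` to `Aⁿ(A*)ᵐ g`) is
an isomorphism from `L²(σ(A), μ_g)` onto the closure of the Krylov subspace
`K(A,g) = span{A^k g : k ∈ ℕ}`.  Then `A` is `K(A,g)`-reduced: both the closure of `K(A,g)`
and `K(A,g)^⊥` are invariant under `A`. -/
theorem krylov_reduced_of_L2_isomorphism
    {H : Type*} [NormedAddCommGroup H] [InnerProductSpace ℂ H] [CompleteSpace H]
    (A : H →L[ℂ] H) (hnormal : IsStarNormal A) (g : H)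
    (μ : Measure ℂ) [IsFiniteMeasure μ]
    (hμsupp : μ (spectrum ℂ A)ᶜ = 0)
    (hμmom : ∀ n m : ℕ,
      ∫ z : ℂ, z ^ n * (starRingEnd ℂ z) ^ m ∂μ
        = @inner ℂ _ _ g (((A ^ n) * ((ContinuousLinearMap.adjoint A) ^ m)) g))
    (T : Lp ℂ 2 μ →ₗᵢ[ℂ] H)
    (hT : ∀ n m : ℕ, ∀ h : MemLp (fun z : ℂ => z ^ n * (starRingEnd ℂ z) ^ m) 2 μ,
      T (h.toLp _) = (A ^ n) (((ContinuousLinearMap.adjoint A) ^ m) g))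
    (hTrange : Set.range ⇑T
      = ((Submodule.span ℂ (Set.range fun k : ℕ => (A ^ k) g)).topologicalClosure : Set H)) :
    (∀ x ∈ (Submodule.span ℂ (Set.range fun k : ℕ => (A ^ k) g)).topologicalClosure,
      A x ∈ (Submodule.span ℂ (Set.range fun k : ℕ => (A ^ k) g)).topologicalClosure) ∧
    (∀ x ∈ (Submodule.span ℂ (Set.range fun k : ℕ => (A ^ k) g))ᗮ,
      A x ∈ (Submodule.span ℂ (Set.range fun k : ℕ => (A ^ k) g))ᗮ) := by
  set K : Submodule ℂ H := Submodule.span ℂ (Set.range fun k : ℕ => (A ^ k) g) with hK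
  -- A maps K into K
  have hmapK : ∀ y ∈ K, A y ∈ K := by
    intro y hy
    refine Submodule.span_induction ?_ ?_ ?_ ?_ hy
    · rintro _ ⟨k, rfl⟩
      exact Submodule.subset_span ⟨k + 1, by simp [pow_succ']⟩
    · simp
    · intro a b _ _ ha hb
      rw [map_add]; exact K.add_mem ha hb
    · intro c a _ ha
      rw [A.map_smul]; exact K.smul_mem c ha
  -- membership of the key vectors in the closure
  have hmem : ∀ k : ℕ, (A ^ k) ((ContinuousLinearMap.adjoint A) g)
      ∈ (K.topologicalClosure : Set H) := by
    intro k
    have hae : ∀ᵐ z ∂μ, z ∈ spectrum ℂ A := by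
      rw [MeasureTheory.ae_iff]
      exact hμsupp
    have hmm : MemLp (fun z : ℂ => z ^ k * (starRingEnd ℂ z) ^ 1) 2 μ := by
      refine MemLp.of_bound ?_ ((‖A‖ * ‖(1 : H →L[ℂ] H)‖) ^ (k + 1)) ?_
      · exact (Continuous.mul (continuous_pow k)
          (by continuity)).aestronglyMeasurable
      · filter_upwards [hae] with z hz
        have hz' : ‖z‖ ≤ ‖A‖ * ‖(1 : H →L[ℂ] H)‖ := by
          simpa using Metric.mem_closedBall.mp (spectrum.subset_closedBall_norm_mul A hz)
        calc ‖z ^ k * (starRingEnd ℂ z) ^ 1‖ = ‖z‖ ^ (k + 1) := by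
              simp [norm_pow, pow_succ]
          _ ≤ (‖A‖ * ‖(1 : H →L[ℂ] H)‖) ^ (k + 1) := by
              exact pow_le_pow_left₀ (norm_nonneg z) hz' _
    have := hT k 1 hmm
    rw [← hTrange]
    refine ⟨hmm.toLp _, ?_⟩
    simpa [pow_one] using this
  constructor
  · intro x hx
    have hx' : x ∈ closure (K : Set H) := hx
    have : A x ∈ closure (K : Set H) :=
      map_mem_closure A.continuous hx' hmapK
    exact this
  · intro x hx
    rw [Submodule.mem_orthogonal]
    intro u hu
    -- reduce to generators
    refine Submodule.span_induction ?_ ?_ ?_ ?_ hu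
    · rintro _ ⟨k, rfl⟩
      have h1 : (inner ℂ ((A ^ k) g) (A x) : ℂ)
          = inner ℂ ((ContinuousLinearMap.adjoint A) ((A ^ k) g)) x := by
        rw [ContinuousLinearMap.adjoint_inner_left]
      have hcomm : (ContinuousLinearMap.adjoint A) ∘L (A ^ k)
          = (A ^ k) ∘L (ContinuousLinearMap.adjoint A) := by
        have h := hnormal.star_comm_self
        have h' : Commute (ContinuousLinearMap.adjoint A) A := by
          rw [← ContinuousLinearMap.star_eq_adjoint]; exact h
        exact (h'.pow_right k)
      have h2 : (ContinuousLinearMap.adjoint A) ((A ^ k) g)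
          = (A ^ k) ((ContinuousLinearMap.adjoint A) g) := by
        have := congrArg (fun B : H →L[ℂ] H => B g) hcomm
        simpa using this
      rw [h1, h2]
      -- (A^k)(A* g) ∈ closure K and x ⊥ K implies inner = 0
      have hclos : (A ^ k) ((ContinuousLinearMap.adjoint A) g) ∈ closure (K : Set H) :=
        hmem k
      have hset : closure (K : Set H) ⊆ {u : H | (inner ℂ u x : ℂ) = 0} := by
        refine closure_minimal ?_ ?_
        · intro v hv
          exact (Submodule.mem_orthogonal K x).mp hx v hv
        · exact isClosed_eq (continuous_id.inner continuous_const) continuous_const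
      exact hset hclos
    · simp
    · intro a b _ _ ha hb
      rw [inner_add_left, ha, hb, add_zero]
    · intro c a _ ha
      rw [inner_smul_left, ha, mul_zero]
end
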